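/- arXiv:2102.05780 — 6 statements merged into one kernel-verified Lean document; each statement's English description precedes it below -/
import Mathlib

section
/- Let H be a complex Hilbert space with dim H ≥ 3 and let [v₁], [v₂] ∈ P(H) be two different lines. Then there exist an orthonormal system {e₁, e₂} ⊆ H and real numbers c ≥ d > 0 with c² + d² = 1 such that [v₁] = [c·e₁ + i·d·e₂] and [v₂] = [c·e₁ − i·d·e₂]. -/
set_option maxHeartbeats 1000000
noncomputable section

variable {H : Type*} [NormedAddCommGroup H] [InnerProductSpace ℂ H]

/-- The quantum angle (Fubini–Study distance) between two lines,
computed from unit representatives. -/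
def qAngle (x y : Projectivization ℂ H) : ℝ :=
  Real.arccos (‖(inner ℂ x.rep y.rep : ℂ)‖ / (‖x.rep‖ * ‖y.rep‖))

/-- The α-set of a set of lines. -/
def alphaSet (α : ℝ) (S : Set (Projectivization ℂ H)) : Set (Projectivization ℂ H) :=
  {x | ∀ y ∈ S, qAngle x y = α}

/-- φ is a Wigner symmetry: it is induced by a unitary or an antiunitary operator. -/
def IsWignerSymmetry (φ : Projectivization ℂ H → Projectivization ℂ H) : Prop :=
  ∃ U : H → H,
    ((∃ e : H ≃ₗᵢ[ℂ] H, U = ⇑e) ∨ (∃ e : H ≃ₗᵢ⋆[ℂ] H, U = ⇑e)) ∧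
    ∀ (v : H) (hv : v ≠ 0),
      (φ (Projectivization.mk ℂ v hv)).submodule = Submodule.span ℂ {U v}

/-- The circle determined by an orthonormal pair and coefficients c, d. -/
def circleSet (e₁ e₂ : H) (c d : ℝ) : Set (Projectivization ℂ H) :=
  {x | ∃ lam : ℂ, ‖lam‖ = 1 ∧
    x.submodule = Submodule.span ℂ {(c : ℂ) • e₁ + (lam * d) • e₂}}

/-- A circle in the projective space. -/
def IsCircle (T : Set (Projectivization ℂ H)) : Prop :=
  ∃ (e₁ e₂ : H) (c d : ℝ), ‖e₁‖ = 1 ∧ ‖e₂‖ = 1 ∧ (inner ℂ e₁ e₂ : ℂ) = 0 ∧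
    0 < c ∧ 0 < d ∧ c ^ 2 + d ^ 2 = 1 ∧ T = circleSet e₁ e₂ c d

/-- A highly-α-symmetric set. -/
def IsHighlyAlphaSymmetric (α : ℝ) (T : Set (Projectivization ℂ H)) : Prop :=
  T.Infinite ∧ (alphaSet α T).Infinite ∧
    ∀ S : Set (Projectivization ℂ H), S ⊆ T → S.ncard = 3 →
      alphaSet α (alphaSet α S) = T

/-- normal form of a pair of distinct lines. -/
theorem pair_normal_form
    (hdim : 3 ≤ Module.rank ℂ H)
    (x y : Projectivization ℂ H) (hxy : x ≠ y) :
    ∃ (e₁ e₂ : H) (c d : ℝ), ‖e₁‖ = 1 ∧ ‖e₂‖ = 1 ∧ (inner ℂ e₁ e₂ : ℂ) = 0 ∧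
      d ≤ c ∧ 0 < d ∧ c ^ 2 + d ^ 2 = 1 ∧
      x.submodule = Submodule.span ℂ {(c : ℂ) • e₁ + (Complex.I * d) • e₂} ∧
      y.submodule = Submodule.span ℂ {(c : ℂ) • e₁ - (Complex.I * d) • e₂} := by
  classical
  have hxr := x.rep_nonzero
  have hyr := y.rep_nonzero
  have hxrn : ‖x.rep‖ ≠ 0 := norm_ne_zero_iff.2 hxr
  have hyrn : ‖y.rep‖ ≠ 0 := norm_ne_zero_iff.2 hyr
  set u : H := (‖x.rep‖⁻¹ : ℂ) • x.rep with hu_def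
  set w₀ : H := (‖y.rep‖⁻¹ : ℂ) • y.rep with hw₀_def
  have hu : ‖u‖ = 1 := by
    simp [hu_def, norm_smul, inv_mul_cancel₀ hxrn]
  have hw₀ : ‖w₀‖ = 1 := by
    simp [hw₀_def, norm_smul, inv_mul_cancel₀ hyrn]
  have hu0 : u ≠ 0 := by intro h; rw [h] at hu; simp at hu
  have hw₀0 : w₀ ≠ 0 := by intro h; rw [h] at hw₀; simp at hw₀
  have hxrep : x.rep = (‖x.rep‖ : ℂ) • u := by
    rw [hu_def, smul_smul, mul_inv_cancel₀ (by exact_mod_cast hxrn), one_smul]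
  set a : ℂ := inner ℂ u w₀ with ha_def
  set lam : ℂ := if a = 0 then 1 else (starRingEnd ℂ) a / ‖a‖ with hlam_def
  have hlam1 : ‖lam‖ = 1 := by
    rw [hlam_def]
    split_ifs with h
    · simp
    · rw [norm_div, RCLike.norm_conj, Complex.norm_real, norm_norm,
        div_self (norm_ne_zero_iff.2 h)]
  have hlam0 : lam ≠ 0 := by intro h; rw [h] at hlam1; simp at hlam1
  set w : H := lam • w₀ with hw_def
  have hw : ‖w‖ = 1 := by rw [hw_def, norm_smul, hlam1, one_mul, hw₀]
  set t : ℝ := ‖a‖ with ht_def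
  have hiw : (inner ℂ u w : ℂ) = (t : ℂ) := by
    rw [hw_def, inner_smul_right, ← ha_def, hlam_def]
    split_ifs with h
    · simp [h, ht_def]
    · rw [div_mul_eq_mul_div, Complex.conj_mul']
      have hn : (‖a‖ : ℂ) ≠ 0 := by exact_mod_cast norm_ne_zero_iff.2 h
      rw [sq, mul_div_assoc, div_self hn, mul_one]
  have ht0 : 0 ≤ t := norm_nonneg _
  have ht1 : t < 1 := by
    have hb : t ≤ 1 := by
      have h := norm_inner_le_norm (𝕜 := ℂ) u w₀
      rw [hu, hw₀] at h; simpa using h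
    rcases lt_or_eq_of_le hb with h | h
    · exact h
    · exfalso
      obtain ⟨r, hr0, hr⟩ := (norm_inner_eq_norm_iff hu0 hw₀0).1
        (by rw [hu, hw₀, mul_one]; exact h)
      apply hxy
      rw [← Projectivization.mk_rep x, ← Projectivization.mk_rep y,
        Projectivization.mk_eq_mk_iff']
      refine ⟨(‖x.rep‖ : ℂ) * r⁻¹ * (‖y.rep‖⁻¹ : ℂ), ?_⟩
      have hw₀u : w₀ = r • u := hr
      have hru : u = r⁻¹ • w₀ := by rw [hw₀u, smul_smul, inv_mul_cancel₀ hr0, one_smul]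
      calc ((‖x.rep‖ : ℂ) * r⁻¹ * (‖y.rep‖⁻¹ : ℂ)) • y.rep
          = ((‖x.rep‖ : ℂ) * r⁻¹) • ((‖y.rep‖⁻¹ : ℂ) • y.rep) := by
            rw [smul_smul, mul_assoc]
        _ = ((‖x.rep‖ : ℂ) * r⁻¹) • (r • u) := by rw [← hw₀_def, hw₀u]
        _ = (‖x.rep‖ : ℂ) • u := by
            rw [smul_smul, mul_assoc, inv_mul_cancel₀ hr0, mul_one]
        _ = x.rep := hxrep.symm
  -- define c, d
  set c : ℝ := Real.sqrt ((1 + t) / 2) with hc_def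
  set d : ℝ := Real.sqrt ((1 - t) / 2) with hd_def
  have hc2 : c ^ 2 = (1 + t) / 2 := Real.sq_sqrt (by linarith)
  have hd2 : d ^ 2 = (1 - t) / 2 := Real.sq_sqrt (by linarith)
  have hcpos : 0 < c := Real.sqrt_pos.2 (by linarith)
  have hdpos : 0 < d := Real.sqrt_pos.2 (by linarith)
  have hdc : d ≤ c := Real.sqrt_le_sqrt (by linarith)
  have hcd : c ^ 2 + d ^ 2 = 1 := by rw [hc2, hd2]; ring
  set e₁ : H := ((2 * c : ℝ) : ℂ)⁻¹ • (u + w) with he₁_def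
  set e₂ : H := (((2 * d : ℝ) : ℂ) * Complex.I)⁻¹ • (u - w) with he₂_def
  have hcC : (c : ℂ) ≠ 0 := by exact_mod_cast hcpos.ne'
  have hdC : (d : ℂ) ≠ 0 := by exact_mod_cast hdpos.ne'
  -- norms of u+w, u-w
  have hnu : (‖u‖ : ℝ) ^ 2 = 1 := by rw [hu]; norm_num
  have hnw : (‖w‖ : ℝ) ^ 2 = 1 := by rw [hw]; norm_num
  have hre : RCLike.re (inner ℂ u w : ℂ) = t := by rw [hiw]; simp
  have haddsq : ‖u + w‖ ^ 2 = 2 * c * (2 * c) := by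
    rw [@norm_add_sq ℂ, hre, hnu, hnw]
    nlinarith [hc2]
  have hsubsq : ‖u - w‖ ^ 2 = 2 * d * (2 * d) := by
    rw [@norm_sub_sq ℂ, hre, hnu, hnw]
    nlinarith [hd2]
  have hnadd : ‖u + w‖ = 2 * c := by
    have h1 : ‖u + w‖ ^ 2 = (2 * c) ^ 2 := by rw [haddsq]; ring
    exact (sq_eq_sq₀ (norm_nonneg _) (by positivity)).1 h1
  have hnsub : ‖u - w‖ = 2 * d := by
    have h1 : ‖u - w‖ ^ 2 = (2 * d) ^ 2 := by rw [hsubsq]; ring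
    exact (sq_eq_sq₀ (norm_nonneg _) (by positivity)).1 h1
  have he₁ : ‖e₁‖ = 1 := by
    rw [he₁_def, norm_smul, hnadd]
    have : ‖((2 * c : ℝ) : ℂ)⁻¹‖ = (2 * c)⁻¹ := by
      rw [norm_inv, Complex.norm_real, Real.norm_of_nonneg (by linarith)]
    rw [this, inv_mul_cancel₀ (by positivity)]
  have he₂ : ‖e₂‖ = 1 := by
    rw [he₂_def, norm_smul, hnsub]
    have : ‖((2 * d : ℝ) * Complex.I)⁻¹‖ = (2 * d)⁻¹ := by
      rw [norm_inv, norm_mul, Complex.norm_I, mul_one, Complex.norm_real,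
        Real.norm_of_nonneg (by linarith)]
    rw [this, inv_mul_cancel₀ (by positivity)]
  have hinner12 : (inner ℂ e₁ e₂ : ℂ) = 0 := by
    rw [he₁_def, he₂_def, inner_smul_left, inner_smul_right]
    have : (inner ℂ (u + w) (u - w) : ℂ) = 0 := by
      rw [inner_sub_right, inner_add_left, inner_add_left]
      have h1 : (inner ℂ u u : ℂ) = 1 := by
        rw [inner_self_eq_norm_sq_to_K, hu]; norm_num
      have h2 : (inner ℂ w w : ℂ) = 1 := by
        rw [inner_self_eq_norm_sq_to_K, hw]; norm_num
      have h3 : (inner ℂ w u : ℂ) = (t : ℂ) := by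
        rw [← inner_conj_symm, hiw]; simp
      rw [h1, h2, hiw, h3]; ring
    rw [this, mul_zero, mul_zero]
  -- key combination identities
  have hkey1 : (c : ℂ) • e₁ + (Complex.I * d) • e₂ = u := by
    rw [he₁_def, he₂_def, smul_smul, smul_smul]
    have h1 : (c : ℂ) * ((2 * c : ℝ) : ℂ)⁻¹ = 2⁻¹ := by
      push_cast; field_simp
    have h2 : Complex.I * (d : ℂ) * ((2 * d : ℝ) * Complex.I)⁻¹ = 2⁻¹ := by
      push_cast
      rw [mul_inv, mul_inv]
      field_simp [Complex.I_ne_zero]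
    rw [h1, h2]
    module
  have hkey2 : (c : ℂ) • e₁ - (Complex.I * d) • e₂ = w := by
    rw [he₁_def, he₂_def, smul_smul, smul_smul]
    have h1 : (c : ℂ) * ((2 * c : ℝ) : ℂ)⁻¹ = 2⁻¹ := by
      push_cast; field_simp
    have h2 : Complex.I * (d : ℂ) * ((2 * d : ℝ) * Complex.I)⁻¹ = 2⁻¹ := by
      push_cast
      rw [mul_inv, mul_inv]
      field_simp [Complex.I_ne_zero]
    rw [h1, h2]
    module
  refine ⟨e₁, e₂, c, d, he₁, he₂, hinner12, hdc, hdpos, hcd, ?_, ?_⟩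
  · rw [hkey1, Projectivization.submodule_eq, hxrep]
    exact Submodule.span_singleton_smul_eq
      (isUnit_iff_ne_zero.2 (by exact_mod_cast hxrn : ((‖x.rep‖ : ℂ)) ≠ 0)) u
  · rw [hkey2, Projectivization.submodule_eq, hw_def, hw₀_def, smul_smul]
    exact (Submodule.span_singleton_smul_eq (isUnit_iff_ne_zero.2
      (mul_ne_zero hlam0
        (inv_ne_zero (by exact_mod_cast hyrn : ((‖y.rep‖ : ℂ)) ≠ 0)))) y.rep).symm
end
end

section
/- Let H be a complex Hilbert space with dim H ≥ 3, fix π/4 < α < π/2 and set a := cos α. Let c ≥ d > 0 with c² + d² = 1, let λ₁, λ₂, λ₃ be pairwise different complex numbers of modulus 1, let {e₁, e₂} ⊆ H be an orthonormal system, and set S₀ := {[c·e₁ + λ_j·d·e₂] : j = 1, 2, 3}. Then: (i) if a > d, then S₀^⟨α⟩ = {[(a/c)·e₁ + h] : h ∈ H, ‖h‖ = √(1 − a²/c²), h ⊥ e₁, h ⊥ e₂}; (ii) if a ≤ d, then S₀^⟨α⟩ is the disjoint union of {[(a/c)·e₁ + h] : h ∈ H, ‖h‖ = √(1 − a²/c²),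 h ⊥ e₁, h ⊥ e₂} and {[(a/d)·e₂ + h] : h ∈ H, ‖h‖ = √(1 − a²/d²), h ⊥ e₁, h ⊥ e₂}. -/
noncomputable section

variable {H : Type*} [NormedAddCommGroup H] [InnerProductSpace ℂ H]

lemma quad_three_roots {p b q μ₁ μ₂ μ₃ : ℂ} (hp : p ≠ 0)
    (h12 : μ₁ ≠ μ₂) (h13 : μ₁ ≠ μ₃) (h23 : μ₂ ≠ μ₃)
    (e1 : p * μ₁ ^ 2 + b * μ₁ + q = 0)
    (e2 : p * μ₂ ^ 2 + b * μ₂ + q = 0)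
    (e3 : p * μ₃ ^ 2 + b * μ₃ + q = 0) : False := by
  have k12 : p * (μ₁ + μ₂) + b = 0 := by
    have h : (μ₁ - μ₂) * (p * (μ₁ + μ₂) + b) = 0 := by linear_combination e1 - e2
    rcases mul_eq_zero.1 h with h | h
    · exact absurd (sub_eq_zero.1 h) h12
    · exact h
  have k13 : p * (μ₁ + μ₃) + b = 0 := by
    have h : (μ₁ - μ₃) * (p * (μ₁ + μ₃) + b) = 0 := by linear_combination e1 - e3
    rcases mul_eq_zero.1 h with h | h
    · exact absurd (sub_eq_zero.1 h) h13
    · exact h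
  have : p * (μ₂ - μ₃) = 0 := by linear_combination k12 - k13
  rcases mul_eq_zero.1 this with h | h
  · exact hp h
  · exact h23 (sub_eq_zero.1 h)

lemma circle_three {z w : ℂ} {t : ℝ} {μ₁ μ₂ μ₃ : ℂ}
    (hm1 : ‖μ₁‖ = 1) (hm2 : ‖μ₂‖ = 1) (hm3 : ‖μ₃‖ = 1)
    (h12 : μ₁ ≠ μ₂) (h13 : μ₁ ≠ μ₃) (h23 : μ₂ ≠ μ₃)
    (e1 : ‖z + μ₁ * w‖ = t) (e2 : ‖z + μ₂ * w‖ = t) (e3 : ‖z + μ₃ * w‖ = t) :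
    z = 0 ∨ w = 0 := by
  by_contra hc
  push_neg at hc
  obtain ⟨hz, hw⟩ := hc
  have key : ∀ μ : ℂ, ‖μ‖ = 1 → ‖z + μ * w‖ = t →
      (w * (starRingEnd ℂ) z) * μ ^ 2 +
        ((z * (starRingEnd ℂ) z + w * (starRingEnd ℂ) w) - (t:ℂ)^2) * μ +
        z * (starRingEnd ℂ) w = 0 := by
    intro μ hμ he
    have hμc : μ * (starRingEnd ℂ) μ = 1 := by
      rw [Complex.mul_conj]
      norm_cast
      rw [Complex.normSq_eq_norm_sq, hμ]; norm_num
    have hec : (z + μ * w) * (starRingEnd ℂ) (z + μ * w) = (t:ℂ)^2 := by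
      rw [Complex.mul_conj]
      norm_cast
      rw [Complex.normSq_eq_norm_sq, he]
    have := hec
    simp only [map_add, map_mul] at this
    linear_combination μ * this - (z * (starRingEnd ℂ) w + μ * w * (starRingEnd ℂ) w) * hμc
  have hp : w * (starRingEnd ℂ) z ≠ 0 := by
    apply mul_ne_zero hw
    simpa using hz
  exact quad_three_roots hp h12 h13 h23 (key _ hm1 e1) (key _ hm2 e2) (key _ hm3 e3)

lemma rep_eq_smul_of_submodule_eq {x : Projectivization ℂ H} {v : H}
    (hx : x.submodule = Submodule.span ℂ {v}) :
    ∃ μ : ℂ, μ ≠ 0 ∧ x.rep = μ • v := by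
  have hmem : x.rep ∈ Submodule.span ℂ {v} := by
    rw [← hx, Projectivization.submodule_eq]
    exact Submodule.mem_span_singleton_self _
  obtain ⟨μ, hμ⟩ := Submodule.mem_span_singleton.1 hmem
  refine ⟨μ, ?_, hμ.symm⟩
  rintro rfl
  exact x.rep_nonzero (by simpa using hμ.symm)

lemma qAngle_eq_iff {x y : Projectivization ℂ H} {u : H} (hu : ‖u‖ = 1)
    (hy : y.submodule = Submodule.span ℂ {u}) {α aa : ℝ}
    (hα0 : 0 ≤ α) (hαπ : α ≤ Real.pi) (ha : aa = Real.cos α) :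
    qAngle x y = α ↔ ‖(inner ℂ x.rep u : ℂ)‖ = aa * ‖x.rep‖ := by
  obtain ⟨ν, hν, hrep⟩ := rep_eq_smul_of_submodule_eq hy
  have hxne : ‖x.rep‖ ≠ 0 := norm_ne_zero_iff.2 x.rep_nonzero
  have hxpos : 0 < ‖x.rep‖ := norm_pos_iff.2 x.rep_nonzero
  have hratio : ‖(inner ℂ x.rep y.rep : ℂ)‖ / (‖x.rep‖ * ‖y.rep‖)
      = ‖(inner ℂ x.rep u : ℂ)‖ / ‖x.rep‖ := by
    rw [hrep, inner_smul_right, norm_smul, norm_mul, hu]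
    rw [mul_one, mul_comm ‖x.rep‖ ‖ν‖,
      mul_div_mul_left _ _ (norm_ne_zero_iff.2 hν)]
  have hle : ‖(inner ℂ x.rep u : ℂ)‖ / ‖x.rep‖ ≤ 1 := by
    rw [div_le_one hxpos]
    calc ‖(inner ℂ x.rep u : ℂ)‖ ≤ ‖x.rep‖ * ‖u‖ := norm_inner_le_norm _ _
    _ = ‖x.rep‖ := by rw [hu, mul_one]
  have hge : 0 ≤ ‖(inner ℂ x.rep u : ℂ)‖ / ‖x.rep‖ := by positivity
  rw [qAngle, hratio]
  constructor
  · intro hq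
    have := Real.cos_arccos (by linarith) hle
    rw [hq, ← ha] at this
    rw [eq_comm, div_eq_iff hxne] at this
    linarith [this]
  · intro hnorm
    have : ‖(inner ℂ x.rep u : ℂ)‖ / ‖x.rep‖ = aa := by
      rw [hnorm]; field_simp
    rw [this, ha]
    exact Real.arccos_cos hα0 hαπ

lemma norm_comb {e₁ e₂ : H} (he₁ : ‖e₁‖ = 1) (he₂ : ‖e₂‖ = 1)
    (he₁₂ : (inner ℂ e₁ e₂ : ℂ) = 0) (ξ₁ ξ₂ : ℂ) {h : H}
    (hh1 : (inner ℂ e₁ h : ℂ) = 0) (hh2 : (inner ℂ e₂ h : ℂ) = 0) :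
    ‖ξ₁ • e₁ + ξ₂ • e₂ + h‖ ^ 2 = ‖ξ₁‖ ^ 2 + ‖ξ₂‖ ^ 2 + ‖h‖ ^ 2 := by
  have h1 : (inner ℂ (ξ₁ • e₁ + ξ₂ • e₂) h : ℂ) = 0 := by
    rw [inner_add_left, inner_smul_left, inner_smul_left, hh1, hh2]
    ring
  have h2 : (inner ℂ (ξ₁ • e₁) (ξ₂ • e₂) : ℂ) = 0 := by
    rw [inner_smul_left, inner_smul_right, he₁₂]; ring
  simp only [pow_two]
  rw [norm_add_sq_eq_norm_sq_add_norm_sq_of_inner_eq_zero _ _ h1,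
    norm_add_sq_eq_norm_sq_add_norm_sq_of_inner_eq_zero _ _ h2,
    norm_smul, norm_smul, he₁, he₂]
  simp

set_option maxHeartbeats 2000000 in
/-- the α-set of a collinear triple S₀. -/
theorem alphaSet_of_collinear_triple
    (hdim : 3 ≤ Module.rank ℂ H)
    (α : ℝ) (hα₁ : Real.pi / 4 < α) (hα₂ : α < Real.pi / 2)
    (a : ℝ) (ha : a = Real.cos α)
    (c d : ℝ) (hdc : d ≤ c) (hd : 0 < d) (hcd : c ^ 2 + d ^ 2 = 1)
    (lam : Fin 3 → ℂ) (hlam : ∀ j, ‖lam j‖ = 1) (hinj : Function.Injective lam)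
    (e₁ e₂ : H) (he₁ : ‖e₁‖ = 1) (he₂ : ‖e₂‖ = 1) (he₁₂ : (inner ℂ e₁ e₂ : ℂ) = 0)
    (S₀ : Set (Projectivization ℂ H))
    (hS₀ : S₀ = {x | ∃ j : Fin 3,
      x.submodule = Submodule.span ℂ {(c : ℂ) • e₁ + (lam j * d) • e₂}}) :
    (d < a → alphaSet α S₀ =
      {x | ∃ h : H, ‖h‖ = Real.sqrt (1 - a ^ 2 / c ^ 2) ∧
        (inner ℂ e₁ h : ℂ) = 0 ∧ (inner ℂ e₂ h : ℂ) = 0 ∧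
        x.submodule = Submodule.span ℂ {((a / c : ℝ) : ℂ) • e₁ + h}}) ∧
    (a ≤ d →
      alphaSet α S₀ =
        {x | ∃ h : H, ‖h‖ = Real.sqrt (1 - a ^ 2 / c ^ 2) ∧
          (inner ℂ e₁ h : ℂ) = 0 ∧ (inner ℂ e₂ h : ℂ) = 0 ∧
          x.submodule = Submodule.span ℂ {((a / c : ℝ) : ℂ) • e₁ + h}} ∪
        {x | ∃ h : H, ‖h‖ = Real.sqrt (1 - a ^ 2 / d ^ 2) ∧
          (inner ℂ e₁ h : ℂ) = 0 ∧ (inner ℂ e₂ h : ℂ) = 0 ∧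
          x.submodule = Submodule.span ℂ {((a / d : ℝ) : ℂ) • e₂ + h}} ∧
      Disjoint
        {x : Projectivization ℂ H | ∃ h : H, ‖h‖ = Real.sqrt (1 - a ^ 2 / c ^ 2) ∧
          (inner ℂ e₁ h : ℂ) = 0 ∧ (inner ℂ e₂ h : ℂ) = 0 ∧
          x.submodule = Submodule.span ℂ {((a / c : ℝ) : ℂ) • e₁ + h}}
        {x : Projectivization ℂ H | ∃ h : H, ‖h‖ = Real.sqrt (1 - a ^ 2 / d ^ 2) ∧
          (inner ℂ e₁ h : ℂ) = 0 ∧ (inner ℂ e₂ h : ℂ) = 0 ∧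
          x.submodule = Submodule.span ℂ {((a / d : ℝ) : ℂ) • e₂ + h}}) := by
  have hπ : (0:ℝ) < Real.pi := Real.pi_pos
  have hc : 0 < d := hd
  have hcpos : 0 < c := lt_of_lt_of_le hd hdc
  have hα0 : 0 ≤ α := le_of_lt (lt_trans (by positivity) hα₁)
  have hαπ : α ≤ Real.pi := le_of_lt (lt_trans hα₂ (by linarith))
  have hapos : 0 < a := by
    rw [ha]
    apply Real.cos_pos_of_mem_Ioo
    constructor <;> [linarith; linarith]
  have ha2 : a < Real.sqrt 2 / 2 := by
    have h1 : Real.cos α < Real.cos (Real.pi / 4) := by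
      apply Real.cos_lt_cos_of_nonneg_of_le_pi (by positivity) hαπ hα₁
    rw [Real.cos_pi_div_four] at h1
    linarith [ha ▸ h1]
  have hc2 : Real.sqrt 2 / 2 ≤ c := by
    nlinarith [Real.sq_sqrt (by norm_num : (2:ℝ) ≥ 0), Real.sqrt_nonneg 2,
      sq_nonneg (2 * c - Real.sqrt 2)]
  have hac : a < c := lt_of_lt_of_le ha2 hc2
  have hacsq : a ^ 2 / c ^ 2 < 1 := by
    rw [div_lt_one (by positivity)]
    nlinarith
  -- basic inner ℂ products
  have hcC : (c:ℂ) ≠ 0 := by exact_mod_cast ne_of_gt hcpos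
  have hdC : (d:ℂ) ≠ 0 := by exact_mod_cast ne_of_gt hd
  have hee₁ : (inner ℂ e₁ e₁ : ℂ) = 1 := by
    rw [inner_self_eq_norm_sq_to_K, he₁]; norm_num
  have hee₂ : (inner ℂ e₂ e₂ : ℂ) = 1 := by
    rw [inner_self_eq_norm_sq_to_K, he₂]; norm_num
  have he₂₁ : (inner ℂ e₂ e₁ : ℂ) = 0 := by
    rw [← inner_conj_symm, he₁₂, map_zero]
  -- the vectors u j
  set u : Fin 3 → H := fun j => (c : ℂ) • e₁ + (lam j * d) • e₂ with hu_def
  have hu_norm : ∀ j, ‖u j‖ = 1 := by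
    intro j
    have h0 : ‖u j‖ ^ 2 = ‖(c:ℂ)‖ ^ 2 + ‖lam j * (d:ℂ)‖ ^ 2 + ‖(0:H)‖ ^ 2 := by
      have := norm_comb (H := H) he₁ he₂ he₁₂ (c:ℂ) (lam j * d)
        (h := 0) (by simp) (by simp)
      simpa [hu_def] using this
    have h1 : ‖u j‖ ^ 2 = 1 := by
      rw [h0, norm_mul, hlam j, Complex.norm_real, Complex.norm_real,
        Real.norm_eq_abs, Real.norm_eq_abs, abs_of_pos hcpos, abs_of_pos hd]
      simp
      nlinarith
    nlinarith [norm_nonneg (u j), h1]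
  have hu_ne : ∀ j, u j ≠ 0 := by
    intro j h0
    have := hu_norm j
    rw [h0] at this
    simp at this
  -- set A and set B
  set A : Set (Projectivization ℂ H) :=
    {x | ∃ h : H, ‖h‖ = Real.sqrt (1 - a ^ 2 / c ^ 2) ∧
      (inner ℂ e₁ h : ℂ) = 0 ∧ (inner ℂ e₂ h : ℂ) = 0 ∧
      x.submodule = Submodule.span ℂ {((a / c : ℝ) : ℂ) • e₁ + h}} with hA_def
  set B : Set (Projectivization ℂ H) :=
    {x | ∃ h : H, ‖h‖ = Real.sqrt (1 - a ^ 2 / d ^ 2) ∧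
      (inner ℂ e₁ h : ℂ) = 0 ∧ (inner ℂ e₂ h : ℂ) = 0 ∧
      x.submodule = Submodule.span ℂ {((a / d : ℝ) : ℂ) • e₂ + h}} with hB_def
  -- backward direction for A
  have backA : A ⊆ alphaSet α S₀ := by
    rintro x ⟨h, hhnorm, hh1, hh2, hxsub⟩ y hy
    rw [hS₀] at hy
    obtain ⟨j, hysub⟩ := hy
    rw [qAngle_eq_iff (hu_norm j) hysub hα0 hαπ ha]
    obtain ⟨μ, hμ, hxrep⟩ := rep_eq_smul_of_submodule_eq hxsub
    have hh1' : (inner ℂ h e₁ : ℂ) = 0 := by rw [← inner_conj_symm, hh1, map_zero]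
    have hh2' : (inner ℂ h e₂ : ℂ) = 0 := by rw [← inner_conj_symm, hh2, map_zero]
    have hvu : (inner ℂ (((a / c : ℝ) : ℂ) • e₁ + h) (u j) : ℂ) = (a : ℂ) := by
      simp only [hu_def, inner_add_left, inner_add_right, inner_smul_left,
        inner_smul_right, hee₁, he₁₂, he₂₁, hh1', hh2', Complex.conj_ofReal]
      push_cast
      field_simp
      ring
    have hvnorm : ‖((a / c : ℝ) : ℂ) • e₁ + h‖ = 1 := by
      have h0 : ‖((a / c : ℝ) : ℂ) • e₁ + (0:ℂ) • e₂ + h‖ ^ 2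
          = ‖((a / c : ℝ):ℂ)‖ ^ 2 + ‖(0:ℂ)‖ ^ 2 + ‖h‖ ^ 2 :=
        norm_comb he₁ he₂ he₁₂ ((a / c : ℝ):ℂ) (0:ℂ) hh1 hh2
      rw [zero_smul, add_zero] at h0
      have h1 : ‖((a / c : ℝ) : ℂ) • e₁ + h‖ ^ 2 = 1 := by
        rw [h0, hhnorm, Complex.norm_real, Real.norm_eq_abs,
          abs_of_pos (by positivity), Real.sq_sqrt (by linarith)]
        field_simp
        simp only [norm_zero]; ring
      nlinarith [norm_nonneg (((a / c : ℝ) : ℂ) • e₁ + h), h1]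
    rw [hxrep, inner_smul_left, hvu, norm_mul, norm_smul, hvnorm, mul_one,
      RCLike.norm_conj]
    rw [Complex.norm_real, Real.norm_eq_abs, abs_of_pos hapos]
    ring
  -- backward direction for B
  have backB : a ≤ d → B ⊆ alphaSet α S₀ := by
    intro had
    have hadsq : a ^ 2 / d ^ 2 ≤ 1 := by
      rw [div_le_one (by positivity)]
      nlinarith
    rintro x ⟨h, hhnorm, hh1, hh2, hxsub⟩ y hy
    rw [hS₀] at hy
    obtain ⟨j, hysub⟩ := hy
    rw [qAngle_eq_iff (hu_norm j) hysub hα0 hαπ ha]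
    obtain ⟨μ, hμ, hxrep⟩ := rep_eq_smul_of_submodule_eq hxsub
    have hh1' : (inner ℂ h e₁ : ℂ) = 0 := by rw [← inner_conj_symm, hh1, map_zero]
    have hh2' : (inner ℂ h e₂ : ℂ) = 0 := by rw [← inner_conj_symm, hh2, map_zero]
    have hvu : (inner ℂ (((a / d : ℝ) : ℂ) • e₂ + h) (u j) : ℂ) = lam j * (a : ℂ) := by
      simp only [hu_def, inner_add_left, inner_add_right, inner_smul_left,
        inner_smul_right, hee₂, he₁₂, he₂₁, hh1', hh2', Complex.conj_ofReal]
      push_cast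
      field_simp
      ring
    have hvnorm : ‖((a / d : ℝ) : ℂ) • e₂ + h‖ = 1 := by
      have h0 : ‖(0:ℂ) • e₁ + ((a / d : ℝ) : ℂ) • e₂ + h‖ ^ 2
          = ‖(0:ℂ)‖ ^ 2 + ‖((a / d : ℝ):ℂ)‖ ^ 2 + ‖h‖ ^ 2 :=
        norm_comb he₁ he₂ he₁₂ (0:ℂ) ((a / d : ℝ):ℂ) hh1 hh2
      rw [zero_smul, zero_add] at h0
      have h1 : ‖((a / d : ℝ) : ℂ) • e₂ + h‖ ^ 2 = 1 := by
        rw [h0, hhnorm, Complex.norm_real, Real.norm_eq_abs,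
          abs_of_pos (by positivity), Real.sq_sqrt (by linarith)]
        field_simp
        simp only [norm_zero]; ring
      nlinarith [norm_nonneg (((a / d : ℝ) : ℂ) • e₂ + h), h1]
    rw [hxrep, inner_smul_left, hvu, norm_mul, norm_mul, norm_smul, hvnorm,
      mul_one, RCLike.norm_conj, hlam j, one_mul]
    rw [Complex.norm_real, Real.norm_eq_abs, abs_of_pos hapos]
    ring
  -- forward direction
  have forward : ∀ x ∈ alphaSet α S₀, x ∈ A ∨ (a ≤ d ∧ x ∈ B) := by
    intro x hx
    set ξ₁ : ℂ := inner ℂ e₁ x.rep with hξ₁_def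
    set ξ₂ : ℂ := inner ℂ e₂ x.rep with hξ₂_def
    set h : H := x.rep - ξ₁ • e₁ - ξ₂ • e₂ with hh_def
    have hh1 : (inner ℂ e₁ h : ℂ) = 0 := by
      simp only [hh_def, inner_sub_right, inner_smul_right, hee₁, he₁₂]
      simp [hξ₁_def]
    have hh2 : (inner ℂ e₂ h : ℂ) = 0 := by
      simp only [hh_def, inner_sub_right, inner_smul_right, hee₂, he₂₁]
      simp [hξ₂_def]
    have hdecomp : x.rep = ξ₁ • e₁ + ξ₂ • e₂ + h := by
      rw [hh_def]; abel
    have hxnorm : ‖x.rep‖ ^ 2 = ‖ξ₁‖ ^ 2 + ‖ξ₂‖ ^ 2 + ‖h‖ ^ 2 := by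
      conv_lhs => rw [hdecomp]
      exact norm_comb he₁ he₂ he₁₂ _ _ hh1 hh2
    have hxpos : 0 < ‖x.rep‖ := norm_pos_iff.2 x.rep_nonzero
    have hxe₁ : (inner ℂ x.rep e₁ : ℂ) = (starRingEnd ℂ) ξ₁ := by
      rw [hξ₁_def, inner_conj_symm]
    have hxe₂ : (inner ℂ x.rep e₂ : ℂ) = (starRingEnd ℂ) ξ₂ := by
      rw [hξ₂_def, inner_conj_symm]
    have hcond : ∀ j, ‖(c:ℂ) * (starRingEnd ℂ) ξ₁ + lam j * ((d:ℂ) * (starRingEnd ℂ) ξ₂)‖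
        = a * ‖x.rep‖ := by
      intro j
      have hmem : Projectivization.mk ℂ (u j) (hu_ne j) ∈ S₀ := by
        rw [hS₀]
        exact ⟨j, Projectivization.submodule_mk _ _⟩
      have := hx _ hmem
      rw [qAngle_eq_iff (hu_norm j) (Projectivization.submodule_mk _ _) hα0 hαπ ha] at this
      have hip : (inner ℂ x.rep (u j) : ℂ)
          = (c:ℂ) * (starRingEnd ℂ) ξ₁ + lam j * ((d:ℂ) * (starRingEnd ℂ) ξ₂) := by
        simp only [hu_def, inner_add_right, inner_smul_right, hxe₁, hxe₂]
        ring
      rw [← hip]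
      exact this
    have hdis01 : lam 0 ≠ lam 1 := fun hh => absurd (hinj hh) (by decide)
    have hdis02 : lam 0 ≠ lam 2 := fun hh => absurd (hinj hh) (by decide)
    have hdis12 : lam 1 ≠ lam 2 := fun hh => absurd (hinj hh) (by decide)
    have hzw := circle_three (hlam 0) (hlam 1) (hlam 2) hdis01 hdis02 hdis12
      (hcond 0) (hcond 1) (hcond 2)
    rcases hzw with hz | hw
    · -- ξ₁ = 0, B case
      have hξ₁0 : ξ₁ = 0 := by
        have : (starRingEnd ℂ) ξ₁ = 0 := by
          rcases mul_eq_zero.1 hz with h' | h'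
          · exact absurd h' (by exact_mod_cast ne_of_gt hcpos)
          · exact h'
        simpa using this
      have hcond0 := hcond 0
      rw [hξ₁0, map_zero, mul_zero, zero_add, norm_mul, norm_mul, hlam 0, one_mul,
        RCLike.norm_conj, Complex.norm_real, Real.norm_eq_abs, abs_of_pos hd] at hcond0
      have hξ₂ne : ξ₂ ≠ 0 := by
        intro h0
        rw [h0, norm_zero, mul_zero] at hcond0
        nlinarith
      have hξ₂norm : ‖ξ₂‖ = a * ‖x.rep‖ / d := by
        rw [eq_div_iff (ne_of_gt hd)]
        linear_combination hcond0
      have had : a ≤ d := by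
        have hle : ‖ξ₂‖ ≤ ‖x.rep‖ := by
          nlinarith [norm_nonneg ξ₂, norm_nonneg x.rep, sq_nonneg ‖ξ₁‖, sq_nonneg ‖h‖]
        rw [hξ₂norm] at hle
        rw [div_le_iff₀ hd] at hle
        nlinarith
      refine Or.inr ⟨had, ?_⟩
      set s : ℂ := ((a / d : ℝ) : ℂ) / ξ₂ with hs_def
      have hs_ne : s ≠ 0 := by
        apply div_ne_zero _ hξ₂ne
        exact_mod_cast ne_of_gt (by positivity : (0:ℝ) < a / d)
      have hs_norm : ‖s‖ = 1 / ‖x.rep‖ := by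
        rw [hs_def, norm_div, Complex.norm_real, Real.norm_eq_abs,
          abs_of_pos (by positivity), hξ₂norm]
        field_simp
      refine ⟨s • h, ?_, ?_, ?_, ?_⟩
      · have hsq : ‖s • h‖ ^ 2 = 1 - a ^ 2 / d ^ 2 := by
          rw [norm_smul, mul_pow, hs_norm]
          have hhsq : ‖h‖ ^ 2 = ‖x.rep‖ ^ 2 - ‖ξ₂‖ ^ 2 := by
            rw [hxnorm, hξ₁0]
            simp
          rw [hhsq, hξ₂norm]
          field_simp
        rw [← Real.sqrt_sq (norm_nonneg (s • h)), hsq]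
      · rw [inner_smul_right, hh1, mul_zero]
      · rw [inner_smul_right, hh2, mul_zero]
      · have hsmul : s • x.rep = ((a / d : ℝ) : ℂ) • e₂ + s • h := by
          rw [hdecomp, hξ₁0, zero_smul, zero_add, smul_add, smul_smul,
            hs_def, div_mul_cancel₀ _ hξ₂ne]
        rw [Projectivization.submodule_eq,
          ← Submodule.span_singleton_smul_eq (Ne.isUnit hs_ne) x.rep, hsmul]
    · -- ξ₂ = 0, A case
      have hξ₂0 : ξ₂ = 0 := by
        have : (starRingEnd ℂ) ξ₂ = 0 := by
          rcases mul_eq_zero.1 hw with h' | h'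
          · exact absurd h' (by exact_mod_cast ne_of_gt hd)
          · exact h'
        simpa using this
      have hcond0 := hcond 0
      rw [hξ₂0, map_zero, mul_zero, mul_zero, add_zero, norm_mul,
        RCLike.norm_conj, Complex.norm_real, Real.norm_eq_abs, abs_of_pos hcpos] at hcond0
      have hξ₁ne : ξ₁ ≠ 0 := by
        intro h0
        rw [h0, norm_zero, mul_zero] at hcond0
        nlinarith
      have hξ₁norm : ‖ξ₁‖ = a * ‖x.rep‖ / c := by
        rw [eq_div_iff (ne_of_gt hcpos)]
        linear_combination hcond0
      refine Or.inl ?_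
      set s : ℂ := ((a / c : ℝ) : ℂ) / ξ₁ with hs_def
      have hs_ne : s ≠ 0 := by
        apply div_ne_zero _ hξ₁ne
        exact_mod_cast ne_of_gt (by positivity : (0:ℝ) < a / c)
      have hs_norm : ‖s‖ = 1 / ‖x.rep‖ := by
        rw [hs_def, norm_div, Complex.norm_real, Real.norm_eq_abs,
          abs_of_pos (by positivity), hξ₁norm]
        field_simp
      refine ⟨s • h, ?_, ?_, ?_, ?_⟩
      · have hsq : ‖s • h‖ ^ 2 = 1 - a ^ 2 / c ^ 2 := by
          rw [norm_smul, mul_pow, hs_norm]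
          have hhsq : ‖h‖ ^ 2 = ‖x.rep‖ ^ 2 - ‖ξ₁‖ ^ 2 := by
            rw [hxnorm, hξ₂0]
            simp
          rw [hhsq, hξ₁norm]
          field_simp
        rw [← Real.sqrt_sq (norm_nonneg (s • h)), hsq]
      · rw [inner_smul_right, hh1, mul_zero]
      · rw [inner_smul_right, hh2, mul_zero]
      · have hsmul : s • x.rep = ((a / c : ℝ) : ℂ) • e₁ + s • h := by
          rw [hdecomp, hξ₂0, zero_smul, add_zero, smul_add, smul_smul,
            hs_def, div_mul_cancel₀ _ hξ₁ne]
        rw [Projectivization.submodule_eq,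
          ← Submodule.span_singleton_smul_eq (Ne.isUnit hs_ne) x.rep, hsmul]
  -- disjointness
  have hdisj : Disjoint A B := by
    rw [Set.disjoint_left]
    rintro x ⟨h, hhnorm, hh1, hh2, hxsub⟩ ⟨h', hhnorm', hh1', hh2', hxsub'⟩
    obtain ⟨μ, hμ, hxrep⟩ := rep_eq_smul_of_submodule_eq hxsub
    obtain ⟨ν, hν, hxrep'⟩ := rep_eq_smul_of_submodule_eq hxsub'
    have h1 : (inner ℂ e₁ x.rep : ℂ) = μ * ((a / c : ℝ) : ℂ) := by
      rw [hxrep, inner_smul_right, inner_add_right, inner_smul_right, hee₁, hh1]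
      ring
    have h2 : (inner ℂ e₁ x.rep : ℂ) = 0 := by
      rw [hxrep', inner_smul_right, inner_add_right, inner_smul_right, he₁₂, hh1']
      ring
    rw [h2] at h1
    have : μ * ((a / c : ℝ) : ℂ) ≠ 0 := by
      apply mul_ne_zero hμ
      exact_mod_cast ne_of_gt (by positivity : (0:ℝ) < a / c)
    exact this h1.symm
  refine ⟨?_, fun had => ⟨?_, hdisj⟩⟩
  · intro hda
    apply Set.eq_of_subset_of_subset
    · intro x hx
      rcases forward x hx with hxA | ⟨had, _⟩
      · exact hxA
      · linarith
    · exact backA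
  · apply Set.eq_of_subset_of_subset
    · intro x hx
      rcases forward x hx with hxA | ⟨_, hxB⟩
      · exact Or.inl hxA
      · exact Or.inr hxB
    · rintro x (hxA | hxB)
      · exact backA hxA
      · exact backB had hxB
end
end

section
/- Let H be a complex Hilbert space with dim H ≥ 4, fix π/4 < α < π/2 and set a := cos α. Let c ≥ d > 0 with c² + d² = 1, let λ₁, λ₂, λ₃ be pairwise different complex numbers of modulus 1, let {e₁, e₂} ⊆ H be an orthonormal system, and set S₀ := {[c·e₁ + λ_j·d·e₂] : j = 1, 2, 3}. Then the double-α-set satisfies S₀^⟨⟨α⟩⟩ = {[c·e₁ + λ·d·e₂] : λ ∈ ℂ, |λ| = 1}. -/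
noncomputable section

variable {H : Type*} [NormedAddCommGroup H] [InnerProductSpace ℂ H]

open scoped ComplexConjugate

private lemma eq_of_sq_eq_sq' {x y : ℝ} (h : x ^ 2 = y ^ 2) (hx : 0 ≤ x) (hy : 0 < y) :
    x = y := by
  have h2 : (x - y) * (x + y) = 0 := by linear_combination h
  rcases mul_eq_zero.mp h2 with h' | h'
  · linarith
  · linarith

private lemma sq3' (s₁ s₂ s₃ : ℝ) (h12 : s₁ ^ 2 = s₂ ^ 2) (h13 : s₁ ^ 2 = s₃ ^ 2) :
    s₁ = s₂ ∨ s₁ = s₃ ∨ s₂ = s₃ := by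
  have e12 : (s₁ - s₂) * (s₁ + s₂) = 0 := by linear_combination h12
  have e13 : (s₁ - s₃) * (s₁ + s₃) = 0 := by linear_combination h13
  rcases mul_eq_zero.mp e12 with h | h
  · left; linarith
  · rcases mul_eq_zero.mp e13 with h' | h'
    · right; left; linarith
    · right; right; linarith

private lemma keyA (l : Fin 3 → ℂ) (hl : ∀ j, ‖l j‖ = 1) (hinj : Function.Injective l)
    (m : ℂ) (h : ∀ j, (l j * m).re = (l 0 * m).re) : m = 0 := by
  by_contra hm
  have hsq : ∀ j, ((l j * m).im) ^ 2 = ‖m‖ ^ 2 - ((l 0 * m).re) ^ 2 := by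
    intro j
    have h1 : ‖l j * m‖ = ‖m‖ := by rw [norm_mul, hl j, one_mul]
    have h2 : ‖l j * m‖ ^ 2 = (l j * m).re ^ 2 + (l j * m).im ^ 2 := by
      rw [← Complex.normSq_eq_norm_sq, Complex.normSq_apply]; ring
    rw [h1] at h2
    rw [← h j]; linarith
  have key : ∀ i j : Fin 3, (l i * m).im = (l j * m).im → i = j := by
    intro i j hij
    have : l i * m = l j * m := Complex.ext (by rw [h i, h j]) hij
    exact hinj (mul_right_cancel₀ hm this)
  have h01 := hsq 0; have h02 := hsq 1; have h03 := hsq 2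
  rcases sq3' ((l 0 * m).im) ((l 1 * m).im) ((l 2 * m).im)
    (by rw [h01, h02]) (by rw [h01, h03]) with e | e | e
  · exact absurd (key _ _ e) (by decide)
  · exact absurd (key _ _ e) (by decide)
  · exact absurd (key _ _ e) (by decide)

private lemma keyB (w z : ℂ) (ρ : ℝ) (l : Fin 3 → ℂ) (hl : ∀ j, ‖l j‖ = 1)
    (hinj : Function.Injective l) (h : ∀ j, ‖w + l j * z‖ = ρ) : w = 0 ∨ z = 0 := by
  have hre : ∀ j, (conj (l j) * (w * conj z)).re = (conj (l 0) * (w * conj z)).re := by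
    intro j
    have e : ∀ i : Fin 3, Complex.normSq w + Complex.normSq z
        + 2 * (conj (l i) * (w * conj z)).re = ρ ^ 2 := by
      intro i
      have h1 : ‖w + l i * z‖ ^ 2 = ρ ^ 2 := by rw [h i]
      rw [← Complex.normSq_eq_norm_sq, Complex.normSq_add] at h1
      have hli : Complex.normSq (l i) = 1 := by
        rw [Complex.normSq_eq_norm_sq, hl i]; norm_num
      rw [Complex.normSq_mul, hli, one_mul] at h1
      have h3 : w * conj (l i * z) = conj (l i) * (w * conj z) := by rw [map_mul]; ring
      rw [h3] at h1
      exact h1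
    have := e j; rw [← e 0] at this; linarith
  have hm := keyA (fun j => conj (l j)) (fun j => by simpa using hl j)
    (fun i j hij => hinj (by simpa using congrArg conj hij)) (w * conj z) hre
  rcases mul_eq_zero.mp hm with h' | h'
  · left; exact h'
  · right; simpa using h'

private lemma rep_eq_smul {z : Projectivization ℂ H} {u : H}
    (hz : z.submodule = Submodule.span ℂ {u}) : ∃ k : ℂ, k ≠ 0 ∧ z.rep = k • u := by
  have h1 : z.rep ∈ Submodule.span ℂ {u} := by
    rw [← hz, Projectivization.submodule_eq]
    exact Submodule.mem_span_singleton_self _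
  obtain ⟨k, hk⟩ := Submodule.mem_span_singleton.mp h1
  refine ⟨k, ?_, hk.symm⟩
  rintro rfl
  exact z.rep_nonzero (by simpa using hk.symm)

private lemma qAngle_eq_alpha_iff {α : ℝ} (h0 : 0 ≤ α) (hπ : α ≤ Real.pi)
    {z y : Projectivization ℂ H} {u v : H} (hu : u ≠ 0) (hv : v ≠ 0)
    (hz : z.submodule = Submodule.span ℂ {u}) (hy : y.submodule = Submodule.span ℂ {v}) :
    qAngle z y = α ↔ ‖(inner ℂ u v : ℂ)‖ = Real.cos α * (‖u‖ * ‖v‖) := by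
  obtain ⟨k, hk, hku⟩ := rep_eq_smul hz
  obtain ⟨k', hk', hkv⟩ := rep_eq_smul hy
  have hnk : ‖k‖ ≠ 0 := norm_ne_zero_iff.mpr hk
  have hnk' : ‖k'‖ ≠ 0 := norm_ne_zero_iff.mpr hk'
  have hinner : ‖(inner ℂ z.rep y.rep : ℂ)‖ = ‖k‖ * ‖k'‖ * ‖(inner ℂ u v : ℂ)‖ := by
    rw [hku, hkv, inner_smul_left, inner_smul_right, norm_mul, norm_mul]
    simp [mul_assoc]
  have hnorms : ‖z.rep‖ * ‖y.rep‖ = ‖k‖ * ‖k'‖ * (‖u‖ * ‖v‖) := by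
    rw [hku, hkv, norm_smul, norm_smul]; ring
  have hdpos : 0 < ‖z.rep‖ * ‖y.rep‖ :=
    mul_pos (norm_pos_iff.mpr z.rep_nonzero) (norm_pos_iff.mpr y.rep_nonzero)
  set t : ℝ := ‖(inner ℂ z.rep y.rep : ℂ)‖ / (‖z.rep‖ * ‖y.rep‖) with ht
  have ht1 : t ≤ 1 := by
    rw [ht, div_le_one hdpos]
    exact norm_inner_le_norm _ _
  have ht0 : 0 ≤ t := div_nonneg (norm_nonneg _) hdpos.le
  constructor
  · intro hq
    have hc : Real.cos α = t := by rw [← hq, qAngle, Real.cos_arccos (by linarith) ht1]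
    have h2 : ‖(inner ℂ z.rep y.rep : ℂ)‖ = Real.cos α * (‖z.rep‖ * ‖y.rep‖) := by
      rw [hc, ht, div_mul_cancel₀ _ hdpos.ne']
    rw [hinner, hnorms] at h2
    exact mul_left_cancel₀ (mul_ne_zero hnk hnk')
      (by linarith [h2] :
        ‖k‖ * ‖k'‖ * ‖(inner ℂ u v : ℂ)‖ = ‖k‖ * ‖k'‖ * (Real.cos α * (‖u‖ * ‖v‖)))
  · intro hq
    have h2 : ‖(inner ℂ z.rep y.rep : ℂ)‖ = Real.cos α * (‖z.rep‖ * ‖y.rep‖) := by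
      rw [hinner, hnorms, hq]; ring
    have hc : t = Real.cos α := by rw [ht, h2, mul_div_assoc, div_self hdpos.ne', mul_one]
    rw [qAngle, ← ht, hc, Real.arccos_cos h0 hπ]

private lemma exists_unit_orthogonal (hdim : 4 ≤ Module.rank ℂ H) (x1 x2 x3 : H) :
    ∃ w : H, ‖w‖ = 1 ∧ (inner ℂ x1 w : ℂ) = 0 ∧ (inner ℂ x2 w : ℂ) = 0 ∧ (inner ℂ x3 w : ℂ) = 0 := by
  set U : Submodule ℂ H := Submodule.span ℂ {x1, x2, x3} with hU
  haveI : FiniteDimensional ℂ U := FiniteDimensional.span_of_finite ℂ (Set.toFinite _)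
  haveI : CompleteSpace U := FiniteDimensional.complete ℂ U
  have hne : Uᗮ ≠ ⊥ := by
    intro hbot
    have htop : U = ⊤ := Submodule.orthogonal_eq_bot_iff.mp hbot
    have h1 : Module.rank ℂ U ≤ 3 := by
      refine le_trans (rank_span_le _) ?_
      refine le_trans (Cardinal.mk_insert_le) ?_
      refine le_trans (add_le_add_left Cardinal.mk_insert_le 1) ?_
      simp [Cardinal.mk_singleton]
      norm_num
    have h2 : Module.rank ℂ H ≤ 3 := by
      rw [← rank_top ℂ H, ← htop]
      exact h1
    have := le_trans hdim h2
    norm_num at this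
  obtain ⟨w₁, hw₁U, hw₁⟩ := Submodule.exists_mem_ne_zero_of_ne_bot hne
  have hn : ‖((‖w₁‖⁻¹ : ℝ) : ℂ) • w₁‖ = 1 := by
    rw [norm_smul, Complex.norm_real, Real.norm_eq_abs, abs_inv, abs_norm]
    exact inv_mul_cancel₀ (norm_ne_zero_iff.mpr hw₁)
  refine ⟨((‖w₁‖⁻¹ : ℝ) : ℂ) • w₁, hn, ?_, ?_, ?_⟩ <;>
  · rw [inner_smul_right]
    have : ∀ x ∈ U, (inner ℂ x w₁ : ℂ) = 0 := fun x hx => hw₁U x hx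
    rw [this _ (Submodule.subset_span (by simp))]
    simp

set_option maxHeartbeats 2000000 in
/-- the double-α-set of a collinear triple, dim ≥ 4. -/
theorem double_alphaSet_of_collinear_triple_dim_ge_four
    (hdim : 4 ≤ Module.rank ℂ H)
    (α : ℝ) (hα₁ : Real.pi / 4 < α) (hα₂ : α < Real.pi / 2)
    (a : ℝ) (ha : a = Real.cos α)
    (c d : ℝ) (hdc : d ≤ c) (hd : 0 < d) (hcd : c ^ 2 + d ^ 2 = 1)
    (lam : Fin 3 → ℂ) (hlam : ∀ j, ‖lam j‖ = 1) (hinj : Function.Injective lam)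
    (e₁ e₂ : H) (he₁ : ‖e₁‖ = 1) (he₂ : ‖e₂‖ = 1) (he₁₂ : (inner ℂ e₁ e₂ : ℂ) = 0)
    (S₀ : Set (Projectivization ℂ H))
    (hS₀ : S₀ = {x | ∃ j : Fin 3,
      x.submodule = Submodule.span ℂ {(c : ℂ) • e₁ + (lam j * d) • e₂}}) :
    alphaSet α (alphaSet α S₀) = circleSet e₁ e₂ c d := by
  have hπ := Real.pi_pos
  have hα0 : 0 ≤ α := by linarith
  have hαπ : α ≤ Real.pi := by linarith
  have ha0 : 0 < a := ha ▸ Real.cos_pos_of_mem_Ioo ⟨by linarith, hα₂⟩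
  have hc : 0 < c := lt_of_lt_of_le hd hdc
  have hs2 : (Real.sqrt 2 / 2) ^ 2 = 1 / 2 := by
    rw [div_pow, Real.sq_sqrt (by norm_num : (2:ℝ) ≥ 0)]; norm_num
  have has : a < Real.sqrt 2 / 2 := by
    have h1 : Real.cos α < Real.cos (Real.pi / 4) :=
      Real.cos_lt_cos_of_nonneg_of_le_pi (by positivity) hαπ hα₁
    rw [Real.cos_pi_div_four] at h1
    linarith [ha ▸ h1]
  have hac : a < c := by
    nlinarith [Real.sqrt_nonneg 2]
  set t : ℝ := Real.sqrt (c ^ 2 - a ^ 2) with htdef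
  have ht2 : t ^ 2 = c ^ 2 - a ^ 2 := Real.sq_sqrt (by nlinarith)
  have ht0 : 0 < t := Real.sqrt_pos.mpr (by nlinarith)
  have he₂₁ : (inner ℂ e₂ e₁ : ℂ) = 0 := by rw [← inner_conj_symm, he₁₂]; simp
  have he₁₁ : (inner ℂ e₁ e₁ : ℂ) = 1 := by
    rw [inner_self_eq_norm_sq_to_K, he₁]; norm_num
  have he₂₂ : (inner ℂ e₂ e₂ : ℂ) = 1 := by
    rw [inner_self_eq_norm_sq_to_K, he₂]; norm_num
  -- the three reference vectors
  set uvec : Fin 3 → H := fun j => (c : ℂ) • e₁ + (lam j * d) • e₂ with huvec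
  have hnorm_gen : ∀ l : ℂ, ‖l‖ = 1 → ‖(c : ℂ) • e₁ + (l * d) • e₂‖ = 1 := by
    intro l hl
    have hinner0 : (inner ℂ ((c : ℂ) • e₁) ((l * d) • e₂) : ℂ) = 0 := by
      rw [inner_smul_left, inner_smul_right, he₁₂]; ring
    have hsq : ‖(c : ℂ) • e₁ + (l * d) • e₂‖ ^ 2 = 1 := by
      rw [@norm_add_sq ℂ, hinner0]
      simp only [map_zero, mul_zero, add_zero]
      rw [norm_smul, norm_smul, he₁, he₂, norm_mul, hl]
      simp only [Complex.norm_real, Real.norm_eq_abs, mul_one, one_mul]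
      rw [abs_of_pos hc, abs_of_pos hd]
      linarith
    have h1 : ‖(c : ℂ) • e₁ + (l * d) • e₂‖ ^ 2 = (1:ℝ) ^ 2 := by rw [hsq]; norm_num
    exact eq_of_sq_eq_sq' h1 (norm_nonneg _) one_pos
  have hu_norm : ∀ j, ‖uvec j‖ = 1 := fun j => hnorm_gen (lam j) (hlam j)
  have hu_ne : ∀ j, uvec j ≠ 0 := by
    intro j h0
    have := hu_norm j
    rw [h0, norm_zero] at this
    norm_num at this
  -- membership criterion for the first alpha set
  have hmemA : ∀ (z : Projectivization ℂ H) (v : H) (hv : v ≠ 0),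
      z.submodule = Submodule.span ℂ {v} →
      (z ∈ alphaSet α S₀ ↔ ∀ j, ‖(inner ℂ v (uvec j) : ℂ)‖ = a * ‖v‖) := by
    intro z v hv hzv
    constructor
    · intro hmem j
      have hy : Projectivization.mk ℂ (uvec j) (hu_ne j) ∈ S₀ := by
        rw [hS₀]
        exact ⟨j, by rw [Projectivization.submodule_mk]⟩
      have := hmem _ hy
      rw [qAngle_eq_alpha_iff hα0 hαπ hv (hu_ne j) hzv
        (Projectivization.submodule_mk _ _)] at this
      rw [this, hu_norm j, ← ha]; ring
    · intro h y hy
      rw [hS₀] at hy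
      obtain ⟨j, hyj⟩ := hy
      rw [qAngle_eq_alpha_iff hα0 hαπ hv (hu_ne j) hzv hyj]
      rw [h j, hu_norm j, ← ha]; ring
  ext z
  constructor
  · -- double alpha set ⊆ circle
    intro hz
    set u : H := z.rep with hu
    have hune : u ≠ 0 := z.rep_nonzero
    have hupos : 0 < ‖u‖ := norm_pos_iff.mpr hune
    set p : ℂ := inner ℂ e₁ u with hp
    set q : ℂ := inner ℂ e₂ u with hq
    set r : H := u - p • e₁ - q • e₂ with hr
    have hdecomp : u = p • e₁ + q • e₂ + r := by rw [hr]; abel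
    have hre1 : (inner ℂ e₁ r : ℂ) = 0 := by
      rw [hr, inner_sub_right, inner_sub_right, inner_smul_right, inner_smul_right,
        he₁₁, he₁₂, ← hp]; ring
    have hre2 : (inner ℂ e₂ r : ℂ) = 0 := by
      rw [hr, inner_sub_right, inner_sub_right, inner_smul_right, inner_smul_right,
        he₂₁, he₂₂, ← hq]; ring
    have hr1 : (inner ℂ r e₁ : ℂ) = 0 := by rw [← inner_conj_symm, hre1]; simp
    have hr2 : (inner ℂ r e₂ : ℂ) = 0 := by rw [← inner_conj_symm, hre2]; simp
    -- the key testing computation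
    have hTest : ∀ w' : H, ‖w'‖ = 1 → (inner ℂ e₁ w' : ℂ) = 0 → (inner ℂ e₂ w' : ℂ) = 0 →
        ∀ μ : ℂ, ‖μ‖ = 1 →
        ‖(a : ℂ) * μ * conj p + (t : ℂ) * conj (inner ℂ w' u : ℂ)‖ = a * (‖u‖ * c) := by
      intro w' hw'n hw'1 hw'2 μ hμ
      have hw'1' : (inner ℂ w' e₁ : ℂ) = 0 := by rw [← inner_conj_symm, hw'1]; simp
      have hw'2' : (inner ℂ w' e₂ : ℂ) = 0 := by rw [← inner_conj_symm, hw'2]; simp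
      set v : H := ((a : ℂ) * μ) • e₁ + (t : ℂ) • w' with hv
      have hvsq : ‖v‖ ^ 2 = c ^ 2 := by
        rw [hv, @norm_add_sq ℂ]
        have hi0 : (inner ℂ (((a : ℂ) * μ) • e₁) ((t : ℂ) • w') : ℂ) = 0 := by
          rw [inner_smul_left, inner_smul_right, hw'1]; ring
        rw [hi0]
        simp only [map_zero, mul_zero, add_zero]
        rw [norm_smul, norm_smul, he₁, hw'n, norm_mul, hμ]
        simp only [Complex.norm_real, Real.norm_eq_abs, mul_one, one_mul]
        rw [abs_of_pos ha0, abs_of_pos ht0]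
        linarith [ht2]
      have hvn : ‖v‖ = c := eq_of_sq_eq_sq' hvsq (norm_nonneg v) hc
      have hvne : v ≠ 0 := by
        intro h0; rw [h0, norm_zero] at hvn; linarith
      have hvA : Projectivization.mk ℂ v hvne ∈ alphaSet α S₀ := by
        rw [hmemA _ v hvne (Projectivization.submodule_mk _ _)]
        intro j
        have hcomp : (inner ℂ v (uvec j) : ℂ) = (c : ℂ) * (conj ((a : ℂ) * μ)) := by
          rw [huvec]
          simp only [hv, inner_add_left, inner_add_right, inner_smul_left,
            inner_smul_right, he₁₁, he₁₂, hw'1', hw'2']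
          ring
        rw [hcomp, norm_mul, RCLike.norm_conj, norm_mul, hμ, hvn]
        simp only [Complex.norm_real, Real.norm_eq_abs, mul_one]
        rw [abs_of_pos hc, abs_of_pos ha0]; ring
      have := hz _ hvA
      rw [qAngle_eq_alpha_iff hα0 hαπ z.rep_nonzero hvne
        (Projectivization.submodule_eq z) (Projectivization.submodule_mk _ _)] at this
      have hcomp : (inner ℂ z.rep v : ℂ)
          = (a : ℂ) * μ * conj p + (t : ℂ) * conj (inner ℂ w' u : ℂ) := by
        rw [hv, inner_add_right, inner_smul_right, inner_smul_right, ← hu,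
          ← inner_conj_symm u e₁, ← hp, ← inner_conj_symm u w']
      rw [hcomp] at this
      rw [this, hvn, ← ha, ← hu]
    -- get a unit vector orthogonal to e₁, e₂ and u
    obtain ⟨w₀, hw₀n, hw₀1, hw₀2, hw₀u⟩ := exists_unit_orthogonal hdim e₁ e₂ u
    have hw₀u' : (inner ℂ w₀ u : ℂ) = 0 := by rw [← inner_conj_symm, hw₀u]; simp
    -- |p| = c‖u‖
    have hpnorm : ‖p‖ = c * ‖u‖ := by
      have := hTest w₀ hw₀n hw₀1 hw₀2 1 (by simp)
      rw [hw₀u'] at this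
      simp only [map_zero, mul_zero, mul_one, add_zero] at this
      rw [norm_mul, RCLike.norm_conj] at this
      simp only [Complex.norm_real, Real.norm_eq_abs] at this
      rw [abs_of_pos ha0] at this
      have h2 : a * ‖p‖ = a * (c * ‖u‖) := by rw [this]; ring
      exact mul_left_cancel₀ (ne_of_gt ha0) h2
    have hpne : p ≠ 0 := by
      intro h0
      rw [h0, norm_zero] at hpnorm
      nlinarith
    -- r = 0
    have hrzero : r = 0 := by
      by_contra hrne
      have hrpos : 0 < ‖r‖ := norm_pos_iff.mpr hrne
      set w' : H := ((‖r‖⁻¹ : ℝ) : ℂ) • r with hw'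
      have hw'n : ‖w'‖ = 1 := by
        rw [hw', norm_smul, Complex.norm_real, Real.norm_eq_abs, abs_inv, abs_norm]
        exact inv_mul_cancel₀ (ne_of_gt hrpos)
      have hw'1 : (inner ℂ e₁ w' : ℂ) = 0 := by
        rw [hw', inner_smul_right, hre1]; ring
      have hw'2 : (inner ℂ e₂ w' : ℂ) = 0 := by
        rw [hw', inner_smul_right, hre2]; ring
      have hru : (inner ℂ r u : ℂ) = ((‖r‖ : ℝ) : ℂ) ^ 2 := by
        conv_lhs => rw [hdecomp]
        rw [inner_add_right, inner_add_right, inner_smul_right, inner_smul_right,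
          hr1, hr2, inner_self_eq_norm_sq_to_K]
        push_cast
        ring_nf
        rfl
      have hw'u : conj (inner ℂ w' u : ℂ) = ((‖r‖ : ℝ) : ℂ) := by
        have hrne' : ((‖r‖ : ℝ) : ℂ) ≠ 0 := by exact_mod_cast ne_of_gt hrpos
        rw [hw', inner_smul_left, hru, map_mul, Complex.conj_conj, map_pow,
          Complex.conj_ofReal]
        push_cast
        rw [pow_two, inv_mul_cancel_left₀ hrne']
      have hcond : ∀ μ : ℂ, ‖μ‖ = 1 →
          ‖(t : ℂ) * ((‖r‖ : ℝ) : ℂ) + μ * ((a : ℂ) * conj p)‖ = a * (‖u‖ * c) := by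
        intro μ hμ
        have := hTest w' hw'n hw'1 hw'2 μ hμ
        rw [hw'u] at this
        rw [← this]
        ring_nf
      have hl3 : ∀ j, ‖(![1, Complex.I, -1] : Fin 3 → ℂ) j‖ = 1 := by
        intro j; fin_cases j <;> simp
      have hinj3 : Function.Injective (![1, Complex.I, -1] : Fin 3 → ℂ) := by
        intro i j hij
        fin_cases i <;> fin_cases j <;>
          first
          | rfl
          | (exfalso; norm_num [Complex.ext_iff] at hij)
      have := keyB ((t : ℂ) * ((‖r‖ : ℝ) : ℂ)) ((a : ℂ) * conj p) (a * (‖u‖ * c))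
        (![1, Complex.I, -1]) hl3 hinj3 (fun j => by
          fin_cases j
          · simpa using hcond 1 (by simp)
          · simpa using hcond Complex.I (by simp)
          · simpa using hcond (-1) (by simp))
      rcases this with h' | h'
      · rw [mul_eq_zero] at h'
        rcases h' with h' | h'
        · exact absurd h' (by simpa using ne_of_gt ht0)
        · exact absurd h' (by simpa using ne_of_gt hrpos)
      · rw [mul_eq_zero] at h'
        rcases h' with h' | h'
        · exact absurd h' (by simpa using ne_of_gt ha0)
        · simp only [map_eq_zero] at h'
          exact hpne h'
    -- now u = p • e₁ + q • e₂
    have hudecomp : u = p • e₁ + q • e₂ := by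
      rw [hdecomp, hrzero, add_zero]
    have hqnorm : ‖q‖ = d * ‖u‖ := by
      have husq : ‖u‖ ^ 2 = ‖p‖ ^ 2 + ‖q‖ ^ 2 := by
        rw [hudecomp, @norm_add_sq ℂ]
        have hi0 : (inner ℂ (p • e₁) (q • e₂) : ℂ) = 0 := by
          rw [inner_smul_left, inner_smul_right, he₁₂]; ring
        rw [hi0]
        simp only [map_zero, mul_zero, add_zero]
        rw [norm_smul, norm_smul, he₁, he₂, mul_one, mul_one]
      have h1 : ‖q‖ ^ 2 = (d * ‖u‖) ^ 2 := by
        rw [hpnorm] at husq; nlinarith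
      exact eq_of_sq_eq_sq' h1 (norm_nonneg q) (mul_pos hd hupos)
    -- exhibit the circle parameter
    refine ⟨(c : ℂ) * q / (p * (d : ℂ)), ?_, ?_⟩
    · rw [norm_div, norm_mul, norm_mul, hqnorm, hpnorm]
      simp only [Complex.norm_real, Real.norm_eq_abs]
      rw [abs_of_pos hc, abs_of_pos hd]
      field_simp
    · have hcne : (c : ℂ) ≠ 0 := by
        simpa using ne_of_gt hc
      have hdne : (d : ℂ) ≠ 0 := by
        simpa using ne_of_gt hd
      have hk : (p / (c : ℂ)) • ((c : ℂ) • e₁ + (((c : ℂ) * q / (p * (d : ℂ))) * d) • e₂)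
          = u := by
        rw [hudecomp, smul_add, smul_smul, smul_smul]
        congr 1
        · congr 1
          field_simp
        · congr 1
          field_simp
      rw [Projectivization.submodule_eq, ← hu, ← hk,
        Submodule.span_singleton_smul_eq]
      exact (IsUnit.mk0 _ (div_ne_zero hpne hcne))
  · -- circle ⊆ double alpha set
    rintro ⟨l₀, hl₀, hzsub⟩
    set u₀ : H := (c : ℂ) • e₁ + (l₀ * d) • e₂ with hu₀
    have hu₀n : ‖u₀‖ = 1 := hnorm_gen l₀ hl₀
    have hu₀ne : u₀ ≠ 0 := by
      intro h0; rw [h0, norm_zero] at hu₀n; norm_num at hu₀n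
    intro y hy
    rw [qAngle_eq_alpha_iff hα0 hαπ hu₀ne y.rep_nonzero hzsub
      (Projectivization.submodule_eq y)]
    rw [hu₀n, one_mul, ← ha]
    set x' : ℂ := inner ℂ y.rep e₁ with hx'
    set y' : ℂ := inner ℂ y.rep e₂ with hy'
    have hA := (hmemA y y.rep y.rep_nonzero (Projectivization.submodule_eq y)).mp hy
    have hcompj : ∀ j, (inner ℂ y.rep (uvec j) : ℂ)
        = (c : ℂ) * x' + lam j * ((d : ℂ) * y') := by
      intro j
      rw [huvec]
      simp only [inner_add_right, inner_smul_right]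
      rw [← hx', ← hy']
      ring
    have hxy0 : (c : ℂ) * x' = 0 ∨ (d : ℂ) * y' = 0 := by
      refine keyB ((c : ℂ) * x') ((d : ℂ) * y') (a * ‖y.rep‖) lam hlam hinj ?_
      intro j
      rw [← hcompj j]
      exact hA j
    have hcomp0 : (inner ℂ u₀ y.rep : ℂ) = conj ((c : ℂ) * x' + l₀ * ((d : ℂ) * y')) := by
      rw [← inner_conj_symm u₀ y.rep, hu₀]
      congr 1
      simp only [inner_add_right, inner_smul_right]
      rw [← hx', ← hy']
      ring
    rw [hcomp0, RCLike.norm_conj]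
    have h0 := hA 0
    rw [hcompj 0] at h0
    rcases hxy0 with h' | h'
    · rw [h'] at h0 ⊢
      rw [zero_add] at h0 ⊢
      rw [norm_mul, hl₀, one_mul]
      rw [norm_mul, hlam 0, one_mul] at h0
      exact h0
    · rw [h'] at h0 ⊢
      rw [mul_zero, add_zero] at h0 ⊢
      exact h0
end
end

section
/- Let H be a complex Hilbert space with dim H ≥ 4 and fix π/4 < α < π/2. Then every circle in P(H) is highly-α-symmetric. -/
noncomputable section
open Projectivization

variable {H : Type*} [NormedAddCommGroup H] [InnerProductSpace ℂ H]

-- ===== auxiliary development =====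


def cvec (e₁ e₂ : H) (c d : ℝ) (l : ℂ) : H := (c : ℂ) • e₁ + (l * d) • e₂

def PU (e₁ e₂ : H) (c d k : ℝ) (u : H) : Prop :=
  ((inner ℂ u e₁ : ℂ) = 0 ∧ d * ‖(inner ℂ u e₂ : ℂ)‖ = k * ‖u‖) ∨
  ((inner ℂ u e₂ : ℂ) = 0 ∧ c * ‖(inner ℂ u e₁ : ℂ)‖ = k * ‖u‖)

def USet (e₁ e₂ : H) (c d k : ℝ) : Set (Projectivization ℂ H) :=
  {x | PU e₁ e₂ c d k x.rep}

-- ============ small lemmas ============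

lemma pyth (x y : H) (h : (inner ℂ x y : ℂ) = 0) : ‖x + y‖ ^ 2 = ‖x‖ ^ 2 + ‖y‖ ^ 2 :=
  by simpa [pow_two] using norm_add_sq_eq_norm_sq_add_norm_sq_of_inner_eq_zero x y h

lemma inner_cvec_right (e₁ e₂ : H) (c d : ℝ) (u : H) (l : ℂ) :
    (inner ℂ u (cvec e₁ e₂ c d l) : ℂ)
      = (c : ℂ) * (inner ℂ u e₁ : ℂ) + l * ((d : ℂ) * (inner ℂ u e₂ : ℂ)) := by
  rw [cvec, inner_add_right, inner_smul_right, inner_smul_right]; ring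

lemma norm_cvec {e₁ e₂ : H} {c d : ℝ} (he₁ : ‖e₁‖ = 1) (he₂ : ‖e₂‖ = 1)
    (h12 : (inner ℂ e₁ e₂ : ℂ) = 0) (hcd : c ^ 2 + d ^ 2 = 1) {l : ℂ} (hl : ‖l‖ = 1) :
    ‖cvec e₁ e₂ c d l‖ = 1 := by
  have h : ‖cvec e₁ e₂ c d l‖ ^ 2 = 1 := by
    rw [cvec, pyth]
    · rw [norm_smul, norm_smul, norm_mul, hl, he₁, he₂]
      simp only [Complex.norm_real, Real.norm_eq_abs]
      rw [mul_one, mul_one, one_mul, sq_abs, sq_abs]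
      exact hcd
    · rw [inner_smul_left, inner_smul_right, h12]; ring
  have hn : 0 ≤ ‖cvec e₁ e₂ c d l‖ := norm_nonneg _
  nlinarith [h, hn]

lemma cvec_ne_zero {e₁ e₂ : H} {c d : ℝ} (he₁ : ‖e₁‖ = 1) (he₂ : ‖e₂‖ = 1)
    (h12 : (inner ℂ e₁ e₂ : ℂ) = 0) (hcd : c ^ 2 + d ^ 2 = 1) {l : ℂ} (hl : ‖l‖ = 1) :
    cvec e₁ e₂ c d l ≠ 0 := by
  intro h
  have := norm_cvec he₁ he₂ h12 hcd hl
  rw [h, norm_zero] at this; norm_num at this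

lemma mem_circleSet_iff {e₁ e₂ : H} {c d : ℝ} (he₁ : ‖e₁‖ = 1) (he₂ : ‖e₂‖ = 1)
    (h12 : (inner ℂ e₁ e₂ : ℂ) = 0) (hcd : c ^ 2 + d ^ 2 = 1) (x : Projectivization ℂ H) :
    x ∈ circleSet e₁ e₂ c d ↔ ∃ l : ℂ, ∃ hl : ‖l‖ = 1,
      x = mk ℂ (cvec e₁ e₂ c d l) (cvec_ne_zero he₁ he₂ h12 hcd hl) := by
  constructor
  · rintro ⟨l, hl, hsub⟩
    refine ⟨l, hl, ?_⟩
    apply Projectivization.submodule_injective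
    rw [hsub, submodule_mk]
    rfl
  · rintro ⟨l, hl, rfl⟩
    exact ⟨l, hl, by rw [submodule_mk]; rfl⟩

-- ===== circ =====

lemma norm_one_mul_conj {l : ℂ} (hl : ‖l‖ = 1) : l * (starRingEnd ℂ) l = 1 := by
  rw [Complex.mul_conj]
  norm_cast
  rw [Complex.normSq_eq_norm_sq, hl]; norm_num

lemma circ (A B : ℂ) (l₁ l₂ l₃ : ℂ) (m : ℝ)
    (h1 : ‖l₁‖ = 1) (h2 : ‖l₂‖ = 1) (h3 : ‖l₃‖ = 1)
    (h12 : l₁ ≠ l₂) (h13 : l₁ ≠ l₃) (h23 : l₂ ≠ l₃)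
    (e1 : ‖A + l₁ * B‖ = m) (e2 : ‖A + l₂ * B‖ = m) (e3 : ‖A + l₃ * B‖ = m) :
    A = 0 ∨ B = 0 := by
  set W := A * (starRingEnd ℂ) B with hW
  have req : ∀ l : ℂ, ‖l‖ = 1 → ‖A + l * B‖ = m →
      2 * (W * (starRingEnd ℂ) l).re = m ^ 2 - Complex.normSq A - Complex.normSq B := by
    intro l hl he
    have h0 : Complex.normSq (A + l * B) = m ^ 2 := by
      rw [Complex.normSq_eq_norm_sq, he]
    rw [Complex.normSq_add, Complex.normSq_mul] at h0
    have hl1 : Complex.normSq l = 1 := by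
      rw [Complex.normSq_eq_norm_sq, hl]; norm_num
    rw [hl1, one_mul] at h0
    have hre : (A * (starRingEnd ℂ) (l * B)) = W * (starRingEnd ℂ) l := by
      rw [map_mul, hW]; ring
    rw [hre] at h0
    linarith
  have C : ∀ l l' : ℂ, (W * (starRingEnd ℂ) l).re = (W * (starRingEnd ℂ) l').re →
      W * (starRingEnd ℂ) l + (starRingEnd ℂ) W * l
        = W * (starRingEnd ℂ) l' + (starRingEnd ℂ) W * l' := by
    intro l l' h
    have h1' := Complex.add_conj (W * (starRingEnd ℂ) l)
    have h2' := Complex.add_conj (W * (starRingEnd ℂ) l')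
    rw [h] at h1'
    have h3' := h1'.trans h2'.symm
    simpa [map_mul, Complex.conj_conj, mul_comm] using h3'
  have r1 := req l₁ h1 e1
  have r2 := req l₂ h2 e2
  have r3 := req l₃ h3 e3
  have E12 := C l₁ l₂ (by linarith)
  have E13 := C l₁ l₃ (by linarith)
  have hm1 := norm_one_mul_conj h1
  have hm2 := norm_one_mul_conj h2
  have hm3 := norm_one_mul_conj h3
  have key : ∀ l l' : ℂ, l * (starRingEnd ℂ) l = 1 → l' * (starRingEnd ℂ) l' = 1 → l ≠ l' →
      W * (starRingEnd ℂ) l + (starRingEnd ℂ) W * l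
        = W * (starRingEnd ℂ) l' + (starRingEnd ℂ) W * l' →
      W = (starRingEnd ℂ) W * (l * l') := by
    intro l l' hml hml' hne hE
    have h0 : (l' - l) * (W - (starRingEnd ℂ) W * (l * l')) = 0 := by
      linear_combination (l * l') * hE - (W * l') * hml + (W * l) * hml'
    rcases mul_eq_zero.mp h0 with h | h
    · exact absurd (sub_eq_zero.mp h).symm hne
    · exact sub_eq_zero.mp h
  have k12 := key l₁ l₂ hm1 hm2 h12 E12
  have k13 := key l₁ l₃ hm1 hm3 h13 E13
  have hV : (starRingEnd ℂ) W * (l₁ * (l₂ - l₃)) = 0 := by linear_combination k13 - k12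
  have hl₁0 : l₁ ≠ 0 := by intro h; rw [h] at h1; simp at h1
  have hVW : (starRingEnd ℂ) W = 0 := by
    rcases mul_eq_zero.mp hV with h | h
    · exact h
    · rcases mul_eq_zero.mp h with h' | h'
      · exact absurd h' hl₁0
      · exact absurd (sub_eq_zero.mp h') h23
  have hW0 : W = 0 := by
    have := congrArg (starRingEnd ℂ) hVW
    simpa using this
  rcases mul_eq_zero.mp (hW ▸ hW0 : A * (starRingEnd ℂ) B = 0) with h | h
  · exact Or.inl h
  · exact Or.inr (by simpa using h)

-- ============ qAngle lemmas ============

lemma qAngle_mk (v w : H) (hv : v ≠ 0) (hw : w ≠ 0) :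
    qAngle (mk ℂ v hv) (mk ℂ w hw)
      = Real.arccos (‖(inner ℂ v w : ℂ)‖ / (‖v‖ * ‖w‖)) := by
  obtain ⟨a, ha⟩ := exists_smul_eq_mk_rep ℂ v hv
  obtain ⟨b, hb⟩ := exists_smul_eq_mk_rep ℂ w hw
  unfold qAngle
  rw [← ha, ← hb, Units.smul_def, Units.smul_def, inner_smul_left, inner_smul_right,
    norm_smul, norm_smul, norm_mul, norm_mul, RCLike.norm_conj]
  congr 1
  have ha0 : ‖(a : ℂ)‖ ≠ 0 := norm_ne_zero_iff.mpr a.ne_zero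
  have hb0 : ‖(b : ℂ)‖ ≠ 0 := norm_ne_zero_iff.mpr b.ne_zero
  have hv0 : ‖v‖ ≠ 0 := norm_ne_zero_iff.mpr hv
  have hw0 : ‖w‖ ≠ 0 := norm_ne_zero_iff.mpr hw
  field_simp

lemma qAngle_mk_eq_iff (v w : H) (hv : v ≠ 0) (hw : w ≠ 0) {α : ℝ}
    (hα0 : 0 ≤ α) (hαπ : α ≤ Real.pi) :
    qAngle (mk ℂ v hv) (mk ℂ w hw) = α ↔
      ‖(inner ℂ v w : ℂ)‖ = Real.cos α * (‖v‖ * ‖w‖) := by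
  rw [qAngle_mk]
  have hv0 : (0:ℝ) < ‖v‖ := norm_pos_iff.mpr hv
  have hw0 : (0:ℝ) < ‖w‖ := norm_pos_iff.mpr hw
  have hvw : (0:ℝ) < ‖v‖ * ‖w‖ := mul_pos hv0 hw0
  have hF0 : 0 ≤ ‖(inner ℂ v w : ℂ)‖ / (‖v‖ * ‖w‖) := by positivity
  have hF1 : ‖(inner ℂ v w : ℂ)‖ / (‖v‖ * ‖w‖) ≤ 1 :=
    (div_le_one hvw).mpr (norm_inner_le_norm v w)
  constructor
  · intro h
    have hc : Real.cos α = ‖(inner ℂ v w : ℂ)‖ / (‖v‖ * ‖w‖) := by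
      rw [← h]; exact Real.cos_arccos (by linarith) hF1
    rw [hc, div_mul_cancel₀ _ (ne_of_gt hvw)]
  · intro h
    have hF : ‖(inner ℂ v w : ℂ)‖ / (‖v‖ * ‖w‖) = Real.cos α := by
      rw [h, mul_div_assoc, div_self (ne_of_gt hvw), mul_one]
    rw [hF, Real.arccos_cos hα0 hαπ]

-- ============ PU lemmas ============

lemma PU_smul {e₁ e₂ : H} {c d k : ℝ} {a : ℂ} (ha : a ≠ 0) (u : H) :
    PU e₁ e₂ c d k (a • u) ↔ PU e₁ e₂ c d k u := by
  have ha' : ‖a‖ ≠ 0 := norm_ne_zero_iff.mpr ha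
  have hc0 : (starRingEnd ℂ) a ≠ 0 := by simpa using ha
  have h1 : ∀ z : H, ((inner ℂ (a • u) z : ℂ) = 0) ↔ ((inner ℂ u z : ℂ) = 0) := by
    intro z
    rw [inner_smul_left, mul_eq_zero]
    constructor
    · rintro (h | h)
      · exact absurd h hc0
      · exact h
    · exact fun h => Or.inr h
  have h2 : ∀ (t : ℝ) (z : H),
      (t * ‖(inner ℂ (a • u) z : ℂ)‖ = k * ‖a • u‖) ↔ (t * ‖(inner ℂ u z : ℂ)‖ = k * ‖u‖) := by
    intro t z
    rw [inner_smul_left, norm_mul, RCLike.norm_conj, norm_smul]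
    constructor
    · intro h
      apply mul_left_cancel₀ ha'
      linarith [h]
    · intro h
      linarith [congrArg (fun r => ‖a‖ * r) h]
  unfold PU
  rw [h1, h1, h2, h2]

lemma mk_mem_USet_iff {e₁ e₂ : H} {c d k : ℝ} (u : H) (hu : u ≠ 0) :
    mk ℂ u hu ∈ USet e₁ e₂ c d k ↔ PU e₁ e₂ c d k u := by
  obtain ⟨a, ha⟩ := exists_smul_eq_mk_rep ℂ u hu
  have : (mk ℂ u hu) ∈ USet e₁ e₂ c d k ↔ PU e₁ e₂ c d k ((mk ℂ u hu).rep) := Iff.rfl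
  rw [this, ← ha, Units.smul_def, PU_smul a.ne_zero]

lemma PU_inner_cvec {e₁ e₂ : H} {c d k : ℝ} (hc : 0 ≤ c) (hd : 0 ≤ d)
    {u : H} (hPU : PU e₁ e₂ c d k u) {l : ℂ} (hl : ‖l‖ = 1) :
    ‖(inner ℂ u (cvec e₁ e₂ c d l) : ℂ)‖ = k * ‖u‖ := by
  rw [inner_cvec_right]
  rcases hPU with ⟨h0, hn⟩ | ⟨h0, hn⟩
  · rw [h0, mul_zero, zero_add, norm_mul, norm_mul, hl, one_mul, Complex.norm_real,
      Real.norm_eq_abs, abs_of_nonneg hd]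
    exact hn
  · rw [h0, mul_zero, mul_zero, add_zero, norm_mul, Complex.norm_real,
      Real.norm_eq_abs, abs_of_nonneg hc]
    exact hn

lemma exists_unit_perp (a b c : H) (hrank : 4 ≤ Module.rank ℂ H) :
    ∃ f : H, ‖f‖ = 1 ∧ (inner ℂ a f : ℂ) = 0 ∧ (inner ℂ b f : ℂ) = 0 ∧ (inner ℂ c f : ℂ) = 0 := by
  set K : Submodule ℂ H := Submodule.span ℂ {a, b, c} with hK
  have hKrank : Module.rank ℂ K ≤ 3 := by
    refine le_trans (rank_span_le _) ?_
    calc (Cardinal.mk ({a,b,c} : Set H)) ≤ Cardinal.mk ({b,c} : Set H) + 1 :=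
          Cardinal.mk_insert_le
      _ ≤ (Cardinal.mk ({c} : Set H) + 1) + 1 := by
          gcongr; exact Cardinal.mk_insert_le
      _ = 3 := by rw [Cardinal.mk_singleton]; norm_num
  have hKne : K ≠ ⊤ := by
    intro h
    rw [h] at hKrank
    rw [rank_top] at hKrank
    have : (4:Cardinal) ≤ 3 := le_trans hrank hKrank
    norm_num at this
  have hex : ¬ ∀ v : H, v ∈ K := fun h => hKne (Submodule.eq_top_iff'.mpr h)
  push_neg at hex
  obtain ⟨v, hv⟩ := hex
  haveI : FiniteDimensional ℂ K := FiniteDimensional.span_of_finite ℂ (Set.toFinite _)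
  set f₀ : H := v - (K.orthogonalProjection v : H) with hf₀
  have hf₀K : f₀ ∈ Kᗮ := K.sub_starProjection_mem_orthogonal v
  have hf₀0 : f₀ ≠ 0 := by
    intro h
    apply hv
    have : v = (K.orthogonalProjection v : H) := by
      have := sub_eq_zero.mp (hf₀ ▸ h)
      exact this
    rw [this]; exact (K.orthogonalProjection v).2
  refine ⟨(‖f₀‖⁻¹ : ℂ) • f₀, norm_smul_inv_norm hf₀0, ?_, ?_, ?_⟩ <;>
  · rw [inner_smul_right]
    have : ∀ x ∈ K, (inner ℂ x f₀ : ℂ) = 0 := fun x hx =>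
      (Submodule.mem_orthogonal K f₀).mp hf₀K x hx
    rw [this _ (Submodule.subset_span (by simp))]
    ring

section Main

variable {e₁ e₂ : H} {c d : ℝ} {α : ℝ}

lemma U_sub_alphaT (he₁ : ‖e₁‖ = 1) (he₂ : ‖e₂‖ = 1) (h12 : (inner ℂ e₁ e₂ : ℂ) = 0)
    (hc : 0 ≤ c) (hd : 0 ≤ d) (hcd : c ^ 2 + d ^ 2 = 1)
    (hα0 : 0 ≤ α) (hαπ : α ≤ Real.pi) :
    USet e₁ e₂ c d (Real.cos α) ⊆ alphaSet α (circleSet e₁ e₂ c d) := by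
  intro x hx y hy
  obtain ⟨l, hl, rfl⟩ := (mem_circleSet_iff he₁ he₂ h12 hcd y).mp hy
  have hiff := qAngle_mk_eq_iff x.rep (cvec e₁ e₂ c d l) x.rep_nonzero
    (cvec_ne_zero he₁ he₂ h12 hcd hl) hα0 hαπ
  rw [mk_rep] at hiff
  apply hiff.mpr
  rw [norm_cvec he₁ he₂ h12 hcd hl, mul_one]
  exact PU_inner_cvec hc hd hx hl

lemma T_sub_alphaU (he₁ : ‖e₁‖ = 1) (he₂ : ‖e₂‖ = 1) (h12 : (inner ℂ e₁ e₂ : ℂ) = 0)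
    (hc : 0 ≤ c) (hd : 0 ≤ d) (hcd : c ^ 2 + d ^ 2 = 1)
    (hα0 : 0 ≤ α) (hαπ : α ≤ Real.pi) :
    circleSet e₁ e₂ c d ⊆ alphaSet α (USet e₁ e₂ c d (Real.cos α)) := by
  intro x hx y hy
  obtain ⟨l, hl, rfl⟩ := (mem_circleSet_iff he₁ he₂ h12 hcd x).mp hx
  have hiff := qAngle_mk_eq_iff (cvec e₁ e₂ c d l) y.rep
    (cvec_ne_zero he₁ he₂ h12 hcd hl) y.rep_nonzero hα0 hαπ
  rw [mk_rep] at hiff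
  apply hiff.mpr
  rw [norm_inner_symm, norm_cvec he₁ he₂ h12 hcd hl, one_mul]
  exact PU_inner_cvec hc hd hy hl

lemma alpha3_sub_U (he₁ : ‖e₁‖ = 1) (he₂ : ‖e₂‖ = 1) (h12 : (inner ℂ e₁ e₂ : ℂ) = 0)
    (hc : 0 < c) (hd : 0 < d) (hcd : c ^ 2 + d ^ 2 = 1)
    (hα0 : 0 ≤ α) (hαπ : α ≤ Real.pi)
    {l₁ l₂ l₃ : ℂ} (hl1 : ‖l₁‖ = 1) (hl2 : ‖l₂‖ = 1) (hl3 : ‖l₃‖ = 1)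
    (h12' : l₁ ≠ l₂) (h13' : l₁ ≠ l₃) (h23' : l₂ ≠ l₃)
    (x : Projectivization ℂ H)
    (hq1 : qAngle x (mk ℂ (cvec e₁ e₂ c d l₁) (cvec_ne_zero he₁ he₂ h12 hcd hl1)) = α)
    (hq2 : qAngle x (mk ℂ (cvec e₁ e₂ c d l₂) (cvec_ne_zero he₁ he₂ h12 hcd hl2)) = α)
    (hq3 : qAngle x (mk ℂ (cvec e₁ e₂ c d l₃) (cvec_ne_zero he₁ he₂ h12 hcd hl3)) = α) :
    x ∈ USet e₁ e₂ c d (Real.cos α) := by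
  have key : ∀ (l : ℂ) (hl : ‖l‖ = 1),
      qAngle x (mk ℂ (cvec e₁ e₂ c d l) (cvec_ne_zero he₁ he₂ h12 hcd hl)) = α →
      ‖(c : ℂ) * (inner ℂ x.rep e₁ : ℂ) + l * ((d : ℂ) * (inner ℂ x.rep e₂ : ℂ))‖
        = Real.cos α * ‖x.rep‖ := by
    intro l hl hq
    have hiff := qAngle_mk_eq_iff x.rep (cvec e₁ e₂ c d l) x.rep_nonzero
      (cvec_ne_zero he₁ he₂ h12 hcd hl) hα0 hαπ
    rw [mk_rep] at hiff
    have := hiff.mp hq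
    rw [norm_cvec he₁ he₂ h12 hcd hl, mul_one, inner_cvec_right] at this
    exact this
  have e1 := key l₁ hl1 hq1
  have e2 := key l₂ hl2 hq2
  have e3 := key l₃ hl3 hq3
  have hAB := circ _ _ _ _ _ _ hl1 hl2 hl3 h12' h13' h23' e1 e2 e3
  have hcC : (c : ℂ) ≠ 0 := by exact_mod_cast hc.ne'
  have hdC : (d : ℂ) ≠ 0 := by exact_mod_cast hd.ne'
  show PU e₁ e₂ c d (Real.cos α) x.rep
  rcases hAB with hA | hB
  · have h0 : (inner ℂ x.rep e₁ : ℂ) = 0 := by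
      rcases mul_eq_zero.mp hA with h | h
      · exact absurd h hcC
      · exact h
    left
    refine ⟨h0, ?_⟩
    rw [hA, zero_add, norm_mul, norm_mul, hl1, one_mul, Complex.norm_real,
      Real.norm_eq_abs, abs_of_nonneg hd.le] at e1
    exact e1
  · have h0 : (inner ℂ x.rep e₂ : ℂ) = 0 := by
      rcases mul_eq_zero.mp hB with h | h
      · exact absurd h hdC
      · exact h
    right
    refine ⟨h0, ?_⟩
    rw [hB, mul_zero, add_zero, norm_mul, Complex.norm_real,
      Real.norm_eq_abs, abs_of_nonneg hc.le] at e1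
    exact e1

end Main

section Hard

variable {e₁ e₂ : H} {c d : ℝ} {α : ℝ}

set_option maxHeartbeats 1000000 in
lemma alphaU_sub_T (hrank : 4 ≤ Module.rank ℂ H)
    (he₁ : ‖e₁‖ = 1) (he₂ : ‖e₂‖ = 1) (h12 : (inner ℂ e₁ e₂ : ℂ) = 0)
    (hc : 0 < c) (hd : 0 < d) (hcd : c ^ 2 + d ^ 2 = 1)
    (hα0 : 0 ≤ α) (hαπ : α ≤ Real.pi) (hk0 : 0 < Real.cos α) (hkd : Real.cos α < d) :
    alphaSet α (USet e₁ e₂ c d (Real.cos α)) ⊆ circleSet e₁ e₂ c d := by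
  intro x hx
  obtain ⟨k, hk⟩ : ∃ k : ℝ, k = Real.cos α := ⟨_, rfl⟩
  rw [← hk] at hx hk0 hkd
  obtain ⟨t₀, ht₀⟩ : ∃ t : ℝ, t = k / d := ⟨_, rfl⟩
  have htd : t₀ * d = k := by rw [ht₀]; field_simp
  have ht₀0 : 0 < t₀ := ht₀ ▸ div_pos hk0 hd
  have ht₀1 : t₀ < 1 := ht₀ ▸ (div_lt_one hd).mpr hkd
  obtain ⟨ρ, hρ⟩ : ∃ ρ : ℝ, ρ = Real.sqrt (1 - t₀ ^ 2) := ⟨_, rfl⟩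
  have hρsq : ρ ^ 2 = 1 - t₀ ^ 2 := by rw [hρ]; exact Real.sq_sqrt (by nlinarith)
  have hρ0 : 0 < ρ := by rw [hρ]; exact Real.sqrt_pos.mpr (by nlinarith)
  obtain ⟨w, hw⟩ : ∃ w : H, w = x.rep := ⟨_, rfl⟩
  have hw0 : w ≠ 0 := hw ▸ x.rep_nonzero
  have hwpos : 0 < ‖w‖ := norm_pos_iff.mpr hw0
  obtain ⟨p, hp⟩ : ∃ p : ℂ, p = inner ℂ e₁ w := ⟨_, rfl⟩
  obtain ⟨q, hq⟩ : ∃ q : ℂ, q = inner ℂ e₂ w := ⟨_, rfl⟩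
  obtain ⟨r, hr⟩ : ∃ r : H, r = w - p • e₁ - q • e₂ := ⟨_, rfl⟩
  have he₁e₁ : (inner ℂ e₁ e₁ : ℂ) = 1 := by
    rw [inner_self_eq_norm_sq_to_K, he₁]; norm_num
  have he₂e₂ : (inner ℂ e₂ e₂ : ℂ) = 1 := by
    rw [inner_self_eq_norm_sq_to_K, he₂]; norm_num
  have h21 : (inner ℂ e₂ e₁ : ℂ) = 0 := by rw [← inner_conj_symm, h12, map_zero]
  have hre₁ : (inner ℂ e₁ r : ℂ) = 0 := by
    rw [hr, inner_sub_right, inner_sub_right, inner_smul_right, inner_smul_right,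
      he₁e₁, h12, ← hp]
    ring
  have hre₂ : (inner ℂ e₂ r : ℂ) = 0 := by
    rw [hr, inner_sub_right, inner_sub_right, inner_smul_right, inner_smul_right,
      he₂e₂, h21, ← hq]
    ring
  have hdecomp : w = p • e₁ + q • e₂ + r := by rw [hr]; abel
  -- key computation for a general test vector
  have hkey : ∀ (s : H) (θ : ℂ), ‖θ‖ = 1 → (inner ℂ e₁ s : ℂ) = 0 → (inner ℂ e₂ s : ℂ) = 0 →
      ‖s‖ = ρ →
      ‖(t₀ : ℂ) * θ * (starRingEnd ℂ) q + (inner ℂ w s : ℂ)‖ = k * ‖w‖ := by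
    intro s θ hθ hs1 hs2 hsρ
    obtain ⟨u, hu⟩ : ∃ u : H, u = ((t₀ : ℂ) * θ) • e₂ + s := ⟨_, rfl⟩
    have hnorm : ‖u‖ = 1 := by
      have hp2 : ‖u‖ ^ 2 = 1 := by
        rw [hu, pyth _ _ (by rw [inner_smul_left, hs2, mul_zero])]
        rw [norm_smul, norm_mul, hθ, Complex.norm_real, Real.norm_eq_abs,
          abs_of_nonneg ht₀0.le, he₂, hsρ]
        nlinarith
      nlinarith [norm_nonneg u]
    have hne : u ≠ 0 := by
      intro h; rw [h, norm_zero] at hnorm; norm_num at hnorm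
    have hmem : mk ℂ u hne ∈ USet e₁ e₂ c d k := by
      rw [mk_mem_USet_iff]
      left
      constructor
      · rw [hu, inner_add_left, inner_smul_left, h21,
          ← inner_conj_symm s e₁, hs1, map_zero]
        ring
      · have hie : (inner ℂ u e₂ : ℂ) = (starRingEnd ℂ) ((t₀ : ℂ) * θ) := by
          rw [hu, inner_add_left, inner_smul_left, he₂e₂,
            ← inner_conj_symm s e₂, hs2, map_zero]
          ring
        rw [hie, hnorm, mul_one, RCLike.norm_conj, norm_mul, hθ, Complex.norm_real,
          Real.norm_eq_abs, abs_of_nonneg ht₀0.le, mul_one]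
        linarith [htd]
    have hang := hx _ hmem
    have hxmk : mk ℂ w hw0 = x := by
      have h' : mk ℂ w hw0 = mk ℂ x.rep x.rep_nonzero :=
        (mk_eq_mk_iff ℂ _ _ _ _).mpr ⟨1, by simp [hw]⟩
      rw [h', mk_rep]
    have hiff := qAngle_mk_eq_iff w u hw0 hne hα0 hαπ
    rw [hxmk, ← hk] at hiff
    have heq := hiff.mp hang
    rw [hnorm, mul_one] at heq
    have hwu : (inner ℂ w u : ℂ) = (t₀ : ℂ) * θ * (starRingEnd ℂ) q + (inner ℂ w s : ℂ) := by
      rw [hu, inner_add_right, inner_smul_right, ← inner_conj_symm w e₂, ← hq]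
      try ring
    rw [hwu] at heq
    exact heq
  obtain ⟨f, hf1, hfe₁, hfe₂, hfr⟩ := exists_unit_perp e₁ e₂ r hrank
  have hwf : (inner ℂ w f : ℂ) = 0 := by
    rw [hdecomp, inner_add_left, inner_add_left, inner_smul_left, inner_smul_left,
      hfe₁, hfe₂, hfr]
    ring
  -- step 1 : ‖q‖ = d * ‖w‖
  have hq_norm : ‖q‖ = d * ‖w‖ := by
    have h1 := hkey ((ρ : ℂ) • f) 1 (by norm_num)
      (by rw [inner_smul_right, hfe₁, mul_zero])
      (by rw [inner_smul_right, hfe₂, mul_zero])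
      (by rw [norm_smul, Complex.norm_real, Real.norm_eq_abs, abs_of_nonneg hρ0.le,
            hf1, mul_one])
    rw [inner_smul_right, hwf, mul_zero, add_zero, mul_one, norm_mul, RCLike.norm_conj,
      Complex.norm_real, Real.norm_eq_abs, abs_of_nonneg ht₀0.le] at h1
    have h2 : t₀ * ‖q‖ = t₀ * (d * ‖w‖) := by rw [h1, ← htd]; ring
    exact mul_left_cancel₀ ht₀0.ne' h2
  -- step 2 : r = 0
  have hr0 : r = 0 := by
    by_contra hrne
    have hrpos : 0 < ‖r‖ := norm_pos_iff.mpr hrne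
    have hqne : q ≠ 0 := by
      intro h
      rw [h, norm_zero] at hq_norm
      nlinarith
    have hqpos : 0 < ‖q‖ := norm_pos_iff.mpr hqne
    have hwr : (inner ℂ w r : ℂ) = ((‖r‖ ^ 2 : ℝ) : ℂ) := by
      rw [hdecomp, inner_add_left, inner_add_left, inner_smul_left, inner_smul_left,
        hre₁, hre₂, inner_self_eq_norm_sq_to_K]
      simp only [mul_zero, zero_add]
      norm_cast
    have h2 := hkey (((ρ / ‖r‖ : ℝ) : ℂ) • r) (q / (‖q‖ : ℂ))
      (by rw [norm_div, Complex.norm_real, Real.norm_eq_abs, abs_of_nonneg (norm_nonneg q),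
            div_self hqpos.ne'])
      (by rw [inner_smul_right, hre₁, mul_zero])
      (by rw [inner_smul_right, hre₂, mul_zero])
      (by rw [norm_smul, Complex.norm_real, Real.norm_eq_abs,
            abs_of_nonneg (div_nonneg hρ0.le (norm_nonneg r)),
            div_mul_cancel₀ _ hrpos.ne'])
    rw [inner_smul_right, hwr] at h2
    have hqq : q * (starRingEnd ℂ) q = ((‖q‖ ^ 2 : ℝ) : ℂ) := by
      have h' : Complex.normSq q = ‖q‖ ^ 2 := by
        rw [Complex.normSq_eq_norm_sq]
      rw [Complex.mul_conj, h']
    have hqC : ((‖q‖ : ℝ) : ℂ) ≠ 0 := by exact_mod_cast hqpos.ne'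
    have hrC : ((‖r‖ : ℝ) : ℂ) ≠ 0 := by exact_mod_cast hrpos.ne'
    have hval : (t₀ : ℂ) * (q / (‖q‖ : ℂ)) * (starRingEnd ℂ) q
        + ((ρ / ‖r‖ : ℝ) : ℂ) * ((‖r‖ ^ 2 : ℝ) : ℂ)
        = (((t₀ * ‖q‖ + ρ * ‖r‖ : ℝ)) : ℂ) := by
      have : (t₀ : ℂ) * (q / (‖q‖ : ℂ)) * (starRingEnd ℂ) q
          = (t₀ : ℂ) * ((q * (starRingEnd ℂ) q) / (‖q‖ : ℂ)) := by ring
      rw [this, hqq]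
      norm_cast
      have habs : ‖q‖ ≠ 0 := by
        exact hqpos.ne'
      field_simp [habs, hrpos.ne']
    rw [hval, Complex.norm_real, Real.norm_eq_abs,
      abs_of_nonneg (by positivity)] at h2
    have ht₀q : t₀ * ‖q‖ = k * ‖w‖ := by rw [hq_norm, ← htd]; ring
    nlinarith [mul_pos hρ0 hrpos]
  -- conclusion
  rw [hr0, add_zero] at hdecomp
  have hwsq : ‖w‖ ^ 2 = ‖p‖ ^ 2 + ‖q‖ ^ 2 := by
    rw [hdecomp, pyth _ _ (by rw [inner_smul_left, inner_smul_right, h12]; ring),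
      norm_smul, norm_smul, he₁, he₂, mul_one, mul_one]
  have hp_norm : ‖p‖ = c * ‖w‖ := by
    have hq2 : ‖q‖ ^ 2 = d ^ 2 * ‖w‖ ^ 2 := by rw [hq_norm]; ring
    have hp2 : ‖p‖ ^ 2 = (c * ‖w‖) ^ 2 := by
      linear_combination (-1 : ℝ) * hwsq - hq2 - (‖w‖ ^ 2) * hcd
    have hs := Real.sqrt_sq (norm_nonneg p)
    rw [← hs, hp2, Real.sqrt_sq (by positivity)]
  have hppos : 0 < ‖p‖ := by rw [hp_norm]; positivity
  have hpne : p ≠ 0 := norm_pos_iff.mp hppos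
  have hcC : (c : ℂ) ≠ 0 := by exact_mod_cast hc.ne'
  have hdC : (d : ℂ) ≠ 0 := by exact_mod_cast hd.ne'
  obtain ⟨l, hl⟩ : ∃ l : ℂ, l = (c : ℂ) * q / ((d : ℂ) * p) := ⟨_, rfl⟩
  have hlnorm : ‖l‖ = 1 := by
    rw [hl, norm_div, norm_mul, norm_mul, Complex.norm_real, Complex.norm_real,
      Real.norm_eq_abs, Real.norm_eq_abs, abs_of_nonneg hc.le, abs_of_nonneg hd.le,
      hq_norm, hp_norm]
    field_simp
  refine ⟨l, hlnorm, ?_⟩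
  have hveq : w = (p / (c : ℂ)) • ((c : ℂ) • e₁ + (l * d) • e₂) := by
    rw [smul_add, smul_smul, smul_smul, hdecomp]
    congr 2
    · field_simp
    · rw [hl]; field_simp
  rw [Projectivization.submodule_eq, ← hw, hveq]
  exact Submodule.span_singleton_smul_eq
    (isUnit_iff_ne_zero.mpr (div_ne_zero hpne hcC)) _

end Hard

section Infinite

variable {e₁ e₂ : H} {c d : ℝ} {α : ℝ}

lemma inner_e₁_cvec (he₁ : ‖e₁‖ = 1) (h12 : (inner ℂ e₁ e₂ : ℂ) = 0) (l : ℂ) :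
    (inner ℂ e₁ (cvec e₁ e₂ c d l) : ℂ) = (c : ℂ) := by
  rw [cvec, inner_add_right, inner_smul_right, inner_smul_right, h12,
    inner_self_eq_norm_sq_to_K, he₁]
  norm_num

lemma inner_e₂_cvec (he₂ : ‖e₂‖ = 1) (h12 : (inner ℂ e₁ e₂ : ℂ) = 0) (l : ℂ) :
    (inner ℂ e₂ (cvec e₁ e₂ c d l) : ℂ) = l * (d : ℂ) := by
  have h21 : (inner ℂ e₂ e₁ : ℂ) = 0 := by rw [← inner_conj_symm, h12, map_zero]
  rw [cvec, inner_add_right, inner_smul_right, inner_smul_right, h21,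
    inner_self_eq_norm_sq_to_K, he₂]
  norm_num

lemma T_infinite (he₁ : ‖e₁‖ = 1) (he₂ : ‖e₂‖ = 1) (h12 : (inner ℂ e₁ e₂ : ℂ) = 0)
    (hc : 0 < c) (hd : 0 < d) (hcd : c ^ 2 + d ^ 2 = 1) :
    (circleSet e₁ e₂ c d).Infinite := by
  have hexp : ∀ θ : ℝ, ‖Complex.exp (θ * Complex.I)‖ = 1 := fun θ => by
    rw [Complex.norm_exp_ofReal_mul_I]
  have hcC : (c : ℂ) ≠ 0 := by exact_mod_cast hc.ne'
  have hdC : (d : ℂ) ≠ 0 := by exact_mod_cast hd.ne'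
  apply Set.infinite_of_injOn_mapsTo
    (f := fun θ : ℝ => mk ℂ (cvec e₁ e₂ c d (Complex.exp (θ * Complex.I)))
      (cvec_ne_zero he₁ he₂ h12 hcd (hexp θ)))
    (s := Set.Ioo 0 Real.pi)
  · intro θ hθ θ' hθ' heq
    simp only at heq
    rw [mk_eq_mk_iff] at heq
    obtain ⟨a, ha⟩ := heq
    have h1 := congrArg (fun v => (inner ℂ e₁ v : ℂ)) ha
    simp only [Units.smul_def, inner_smul_right, inner_e₁_cvec he₁ h12] at h1
    have ha1 : (a : ℂ) = 1 := mul_right_cancel₀ hcC (h1.trans (one_mul _).symm)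
    rw [Units.smul_def, ha1, one_smul] at ha
    have h2 := congrArg (fun v => (inner ℂ e₂ v : ℂ)) ha
    simp only [inner_e₂_cvec he₂ h12] at h2
    have h3 : Complex.exp (θ' * Complex.I) = Complex.exp (θ * Complex.I) :=
      mul_right_cancel₀ hdC h2
    have h4 : Real.cos θ' = Real.cos θ := by
      have := congrArg Complex.re h3
      rwa [Complex.exp_ofReal_mul_I_re, Complex.exp_ofReal_mul_I_re] at this
    exact (Real.injOn_cos ⟨hθ.1.le, hθ.2.le⟩ ⟨hθ'.1.le, hθ'.2.le⟩ h4.symm)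
  · intro θ hθ
    exact (mem_circleSet_iff he₁ he₂ h12 hcd _).mpr ⟨_, hexp θ, rfl⟩
  · exact Set.Ioo_infinite (by linarith [Real.pi_pos])

lemma U_infinite (hrank : 4 ≤ Module.rank ℂ H)
    (he₁ : ‖e₁‖ = 1) (he₂ : ‖e₂‖ = 1) (h12 : (inner ℂ e₁ e₂ : ℂ) = 0)
    (hd : 0 < d) (hk0 : 0 < Real.cos α) (hkd : Real.cos α < d) :
    (USet e₁ e₂ c d (Real.cos α)).Infinite := by
  obtain ⟨k, hk⟩ : ∃ k : ℝ, k = Real.cos α := ⟨_, rfl⟩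
  rw [← hk] at hk0 hkd ⊢
  obtain ⟨t₀, ht₀⟩ : ∃ t : ℝ, t = k / d := ⟨_, rfl⟩
  have htd : t₀ * d = k := by rw [ht₀]; field_simp
  have ht₀0 : 0 < t₀ := ht₀ ▸ div_pos hk0 hd
  have ht₀1 : t₀ < 1 := ht₀ ▸ (div_lt_one hd).mpr hkd
  obtain ⟨ρ, hρ⟩ : ∃ ρ : ℝ, ρ = Real.sqrt (1 - t₀ ^ 2) := ⟨_, rfl⟩
  have hρsq : ρ ^ 2 = 1 - t₀ ^ 2 := by rw [hρ]; exact Real.sq_sqrt (by nlinarith)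
  have hρ0 : 0 < ρ := by rw [hρ]; exact Real.sqrt_pos.mpr (by nlinarith)
  obtain ⟨f, hf1, hfe₁, hfe₂, -⟩ := exists_unit_perp e₁ e₂ 0 hrank
  obtain ⟨g, hg1, hge₁, hge₂, hgf⟩ := exists_unit_perp e₁ e₂ f hrank
  have h21 : (inner ℂ e₂ e₁ : ℂ) = 0 := by rw [← inner_conj_symm, h12, map_zero]
  have he₂e₂ : (inner ℂ e₂ e₂ : ℂ) = 1 := by
    rw [inner_self_eq_norm_sq_to_K, he₂]; norm_num
  have hff : (inner ℂ f f : ℂ) = 1 := by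
    rw [inner_self_eq_norm_sq_to_K, hf1]; norm_num
  have hfe₁' : (inner ℂ f e₁ : ℂ) = 0 := by rw [← inner_conj_symm, hfe₁, map_zero]
  have hfe₂' : (inner ℂ f e₂ : ℂ) = 0 := by rw [← inner_conj_symm, hfe₂, map_zero]
  have hge₁' : (inner ℂ g e₁ : ℂ) = 0 := by rw [← inner_conj_symm, hge₁, map_zero]
  have hge₂' : (inner ℂ g e₂ : ℂ) = 0 := by rw [← inner_conj_symm, hge₂, map_zero]
  have ht₀C : ((t₀ : ℝ) : ℂ) ≠ 0 := by exact_mod_cast ht₀0.ne'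
  set uv : ℝ → H := fun θ =>
    (t₀ : ℂ) • e₂ + ((ρ * Real.cos θ : ℝ) : ℂ) • f + ((ρ * Real.sin θ : ℝ) : ℂ) • g
    with huv
  have hnorm : ∀ θ : ℝ, ‖uv θ‖ = 1 := by
    intro θ
    have hsq : ‖uv θ‖ ^ 2 = 1 := by
      rw [huv]
      simp only
      rw [pyth _ _ (by
        rw [inner_add_left, inner_smul_left, inner_smul_left, inner_smul_right,
          inner_smul_right, hge₂, hgf]
        ring)]
      rw [pyth _ _ (by rw [inner_smul_left, inner_smul_right, hfe₂]; ring)]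
      rw [norm_smul, norm_smul, norm_smul, he₂, hf1, hg1, Complex.norm_real,
        Complex.norm_real, Complex.norm_real, Real.norm_eq_abs, Real.norm_eq_abs,
        Real.norm_eq_abs]
      simp only [mul_one]
      rw [abs_of_nonneg ht₀0.le]
      nlinarith [Real.sin_sq_add_cos_sq θ, sq_abs (ρ * Real.cos θ), sq_abs (ρ * Real.sin θ)]
    nlinarith [norm_nonneg (uv θ), hsq]
  have hne : ∀ θ : ℝ, uv θ ≠ 0 := by
    intro θ h
    have := hnorm θ
    rw [h, norm_zero] at this
    norm_num at this
  have hinn_e₂ : ∀ θ : ℝ, (inner ℂ e₂ (uv θ) : ℂ) = (t₀ : ℂ) := by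
    intro θ
    rw [huv]
    simp only
    rw [inner_add_right, inner_add_right, inner_smul_right, inner_smul_right,
      inner_smul_right, he₂e₂, hfe₂, hge₂]
    ring
  have hinn_f : ∀ θ : ℝ, (inner ℂ f (uv θ) : ℂ) = ((ρ * Real.cos θ : ℝ) : ℂ) := by
    intro θ
    rw [huv]
    simp only
    rw [inner_add_right, inner_add_right, inner_smul_right, inner_smul_right,
      inner_smul_right, hfe₂', hff, hgf]
    ring
  have hmem : ∀ θ : ℝ, mk ℂ (uv θ) (hne θ) ∈ USet e₁ e₂ c d k := by
    intro θ
    rw [mk_mem_USet_iff]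
    left
    constructor
    · rw [huv]
      simp only
      rw [inner_add_left, inner_add_left, inner_smul_left, inner_smul_left,
        inner_smul_left, h21, hfe₁', hge₁']
      ring
    · rw [norm_inner_symm, hinn_e₂ θ, hnorm θ, Complex.norm_real, Real.norm_eq_abs,
        abs_of_nonneg ht₀0.le, mul_one]
      linarith [htd]
  apply Set.infinite_of_injOn_mapsTo
    (f := fun θ : ℝ => mk ℂ (uv θ) (hne θ)) (s := Set.Ioo 0 (Real.pi / 2))
  · intro θ hθ θ' hθ' heq
    simp only at heq
    rw [mk_eq_mk_iff] at heq
    obtain ⟨a, ha⟩ := heq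
    have h1 := congrArg (fun v => (inner ℂ e₂ v : ℂ)) ha
    simp only [Units.smul_def, inner_smul_right, hinn_e₂] at h1
    have ha1 : (a : ℂ) = 1 := mul_right_cancel₀ ht₀C (h1.trans (one_mul _).symm)
    rw [Units.smul_def, ha1, one_smul] at ha
    have h2 := congrArg (fun v => (inner ℂ f v : ℂ)) ha
    simp only [hinn_f] at h2
    have h3 : ρ * Real.cos θ' = ρ * Real.cos θ := by exact_mod_cast h2
    have h4 : Real.cos θ' = Real.cos θ := mul_left_cancel₀ hρ0.ne' h3
    have hπ := Real.pi_pos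
    exact Real.injOn_cos ⟨hθ.1.le, by linarith [hθ.2]⟩ ⟨hθ'.1.le, by linarith [hθ'.2]⟩ h4.symm
  · intro θ _
    exact hmem θ
  · exact Set.Ioo_infinite (by linarith [Real.pi_pos])

end Infinite

section Swap

variable {e₁ e₂ : H} {c d : ℝ}

lemma circleSet_swap_subset : circleSet e₁ e₂ c d ⊆ circleSet e₂ e₁ d c := by
  rintro x ⟨l, hl, hsub⟩
  have hl0 : l ≠ 0 := by
    intro h; rw [h, norm_zero] at hl; norm_num at hl
  refine ⟨(starRingEnd ℂ) l, by rw [RCLike.norm_conj, hl], ?_⟩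
  have hml := norm_one_mul_conj hl
  have hsc : l * ((starRingEnd ℂ) l * c) = (c : ℂ) := by
    linear_combination ((c : ℂ)) * hml
  have hv : (c : ℂ) • e₁ + (l * d) • e₂
      = l • ((d : ℂ) • e₂ + ((starRingEnd ℂ) l * c) • e₁) := by
    rw [smul_add, smul_smul, smul_smul, hsc, add_comm]
  rw [hsub, hv]
  exact (Submodule.span_singleton_smul_eq (isUnit_iff_ne_zero.mpr hl0) _)

lemma circleSet_swap : circleSet e₁ e₂ c d = circleSet e₂ e₁ d c :=
  le_antisymm circleSet_swap_subset circleSet_swap_subset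

lemma USet_swap (k : ℝ) : USet e₂ e₁ d c k = USet e₁ e₂ c d k := by
  ext x
  exact or_comm

end Swap

lemma master {e₁ e₂ : H} {c d α : ℝ} (hrank : 4 ≤ Module.rank ℂ H)
    (he₁ : ‖e₁‖ = 1) (he₂ : ‖e₂‖ = 1) (h12 : (inner ℂ e₁ e₂ : ℂ) = 0)
    (hc : 0 < c) (hd : 0 < d) (hcd : c ^ 2 + d ^ 2 = 1)
    (hα₁ : Real.pi / 4 < α) (hα₂ : α < Real.pi / 2)
    (hkd : Real.cos α < d) :
    IsHighlyAlphaSymmetric α (circleSet e₁ e₂ c d) := by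
  have hπ := Real.pi_pos
  have hα0 : 0 ≤ α := by linarith
  have hαπ : α ≤ Real.pi := by linarith
  have hk0 : 0 < Real.cos α := Real.cos_pos_of_mem_Ioo ⟨by linarith, hα₂⟩
  refine ⟨T_infinite he₁ he₂ h12 hc hd hcd, ?_, ?_⟩
  · exact (U_infinite hrank he₁ he₂ h12 hd hk0 hkd).mono
      (U_sub_alphaT he₁ he₂ h12 hc.le hd.le hcd hα0 hαπ)
  · intro S hsub hS3
    obtain ⟨x, y, z, hxy, hxz, hyz, rfl⟩ := Set.ncard_eq_three.mp hS3
    obtain ⟨l₁, hl₁, hx⟩ := (mem_circleSet_iff he₁ he₂ h12 hcd x).mp (hsub (by simp))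
    obtain ⟨l₂, hl₂, hy⟩ := (mem_circleSet_iff he₁ he₂ h12 hcd y).mp
      (hsub (by simp))
    obtain ⟨l₃, hl₃, hz⟩ := (mem_circleSet_iff he₁ he₂ h12 hcd z).mp
      (hsub (by simp))
    have hne12 : l₁ ≠ l₂ := by rintro rfl; exact hxy (hx.trans hy.symm)
    have hne13 : l₁ ≠ l₃ := by rintro rfl; exact hxz (hx.trans hz.symm)
    have hne23 : l₂ ≠ l₃ := by rintro rfl; exact hyz (hy.trans hz.symm)
    have hU : alphaSet α {x, y, z} = USet e₁ e₂ c d (Real.cos α) := by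
      apply Set.Subset.antisymm
      · intro t ht
        have h1 := ht x (by simp)
        have h2 := ht y (by simp)
        have h3 := ht z (by simp)
        rw [hx] at h1
        rw [hy] at h2
        rw [hz] at h3
        exact alpha3_sub_U he₁ he₂ h12 hc hd hcd hα0 hαπ hl₁ hl₂ hl₃
          hne12 hne13 hne23 t h1 h2 h3
      · intro t ht y' hy'
        exact U_sub_alphaT he₁ he₂ h12 hc.le hd.le hcd hα0 hαπ ht y' (hsub hy')
    rw [hU]
    exact Set.Subset.antisymm
      (alphaU_sub_T hrank he₁ he₂ h12 hc hd hcd hα0 hαπ hk0 hkd)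
      (T_sub_alphaU he₁ he₂ h12 hc.le hd.le hcd hα0 hαπ)

/-- every circle is highly-α-symmetric, dim ≥ 4. -/
theorem circle_is_highly_alpha_symmetric
    (hdim : 4 ≤ Module.rank ℂ H)
    (α : ℝ) (hα₁ : Real.pi / 4 < α) (hα₂ : α < Real.pi / 2)
    (T : Set (Projectivization ℂ H)) (hT : IsCircle T) :
    IsHighlyAlphaSymmetric α T := by
  obtain ⟨e₁, e₂, c, d, he₁, he₂, h12, hc, hd, hcd, rfl⟩ := hT
  have hπ := Real.pi_pos
  have hk0 : 0 < Real.cos α := Real.cos_pos_of_mem_Ioo ⟨by linarith, hα₂⟩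
  have hsq : Real.cos α ^ 2 < 1 / 2 := by
    have h1 : Real.cos α < Real.cos (Real.pi / 4) :=
      Real.cos_lt_cos_of_nonneg_of_le_pi (by positivity) (by linarith) hα₁
    rw [Real.cos_pi_div_four] at h1
    nlinarith [Real.sq_sqrt (by norm_num : (0:ℝ) ≤ 2), Real.sqrt_nonneg 2]
  have hcase : Real.cos α < d ∨ Real.cos α < c := by
    by_contra h
    push_neg at h
    nlinarith [h.1, h.2]
  rcases hcase with h | h
  · exact master hdim he₁ he₂ h12 hc hd hcd hα₁ hα₂ h
  · rw [circleSet_swap]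
    have h21 : (inner ℂ e₂ e₁ : ℂ) = 0 := by rw [← inner_conj_symm, h12, map_zero]
    exact master hdim he₂ he₁ h21 hd hc (by linarith) hα₁ hα₂ h
end
end

section
/- Let H be a complex Hilbert space with dim H ≥ 3 and fix π/4 < α < π/2. Then for every subset S ⊆ P(H), the α-set S^⟨α⟩ is a closed subset of P(H) with respect to the quantum-angle metric. Furthermore, if dim H = 3, then every highly-α-symmetric set T ⊆ P(H) is compact, and T contains at least one element that is not an isolated point of T. -/
noncomputable section

variable {H : Type*} [NormedAddCommGroup H] [InnerProductSpace ℂ H]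

def qA (u v : H) : ℝ := Real.arccos (‖(inner ℂ u v : ℂ)‖ / (‖u‖ * ‖v‖))

lemma arccos_anti {x y : ℝ} (h : x ≤ y) : Real.arccos y ≤ Real.arccos x := by
  unfold Real.arccos
  have := Real.monotone_arcsin h
  linarith

lemma qA_ratio_nonneg (u v : H) : 0 ≤ ‖(inner ℂ u v : ℂ)‖ / (‖u‖ * ‖v‖) := by
  positivity

lemma qA_ratio_le_one (u v : H) : ‖(inner ℂ u v : ℂ)‖ / (‖u‖ * ‖v‖) ≤ 1 := by
  rcases eq_or_ne (‖u‖ * ‖v‖) 0 with h | h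
  · simp [h]
  · rw [div_le_one (lt_of_le_of_ne (by positivity) (Ne.symm h))]
    exact norm_inner_le_norm u v

lemma qA_smul_left (u v : H) (c : ℂ) (hc : c ≠ 0) : qA (c • u) v = qA u v := by
  unfold qA
  congr 1
  rw [inner_smul_left, norm_mul, norm_smul, RCLike.norm_conj]
  have hc' : ‖c‖ ≠ 0 := norm_ne_zero_iff.mpr hc
  rw [mul_assoc, mul_div_mul_left _ _ hc']

lemma qA_symm (u v : H) : qA u v = qA v u := by
  unfold qA
  rw [norm_inner_symm, mul_comm]

lemma qA_smul_right (u v : H) (c : ℂ) (hc : c ≠ 0) : qA u (c • v) = qA u v := by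
  rw [qA_symm, qA_smul_left _ _ _ hc, qA_symm]

lemma qAngle_eq_qA (x y : Projectivization ℂ H) : qAngle x y = qA x.rep y.rep := rfl

lemma qAngle_mk_s14 (a b : H) (ha : a ≠ 0) (hb : b ≠ 0) :
    qAngle (Projectivization.mk ℂ a ha) (Projectivization.mk ℂ b hb) = qA a b := by
  obtain ⟨c, hc⟩ := Projectivization.exists_smul_eq_mk_rep ℂ a ha
  obtain ⟨d, hd⟩ := Projectivization.exists_smul_eq_mk_rep ℂ b hb
  rw [qAngle_eq_qA, ← hc, ← hd, Units.smul_def, Units.smul_def,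
    qA_smul_left _ _ _ c.ne_zero, qA_smul_right _ _ _ d.ne_zero]

lemma qAngle_symm (x y : Projectivization ℂ H) : qAngle x y = qAngle y x := by
  rw [qAngle_eq_qA, qAngle_eq_qA, qA_symm]

lemma norm_orth (u v : H) (hu : ‖u‖ = 1) (hv : ‖v‖ = 1) :
    ‖u - (inner ℂ v u : ℂ) • v‖ ^ 2 = 1 - ‖(inner ℂ u v : ℂ)‖ ^ 2 := by
  set c : ℂ := (inner ℂ v u : ℂ) with hcdef
  have hcc : (inner ℂ u v : ℂ) = starRingEnd ℂ c := by
    rw [hcdef, inner_conj_symm]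
  have h := @norm_sub_sq ℂ _ _ _ _ u (c • v)
  rw [inner_smul_right, hcc, Complex.mul_conj, norm_smul, hv, hu] at h
  have : Complex.normSq c = ‖c‖ ^ 2 := by
    rw [← Complex.sq_norm]
  simp only [RCLike.re_to_complex, Complex.ofReal_re] at h
  rw [h, hcc, RCLike.norm_conj, this]
  ring

lemma key_ineq (u v w : H) (hu : ‖u‖ = 1) (hv : ‖v‖ = 1) (hw : ‖w‖ = 1) :
    ‖(inner ℂ u v : ℂ)‖ * ‖(inner ℂ v w : ℂ)‖ -
      Real.sqrt (1 - ‖(inner ℂ u v : ℂ)‖ ^ 2) * Real.sqrt (1 - ‖(inner ℂ v w : ℂ)‖ ^ 2) ≤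
    ‖(inner ℂ u w : ℂ)‖ := by
  set u' : H := u - (inner ℂ v u : ℂ) • v with hu'def
  set w' : H := w - (inner ℂ v w : ℂ) • v with hw'def
  have hvv : (inner ℂ v v : ℂ) = 1 := by
    rw [inner_self_eq_norm_sq_to_K, hv]; norm_num
  have hu'v : (inner ℂ u' v : ℂ) = 0 := by
    rw [hu'def, inner_sub_left, inner_smul_left, hvv, mul_one, inner_conj_symm, sub_self]
  have hvw' : (inner ℂ v w' : ℂ) = 0 := by
    rw [hw'def, inner_sub_right, inner_smul_right, hvv, mul_one, sub_self]
  have hdecomp : (inner ℂ u w : ℂ) = inner ℂ u' w' + (inner ℂ u v : ℂ) * (inner ℂ v w : ℂ) := by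
    have h1 : u = u' + (inner ℂ v u : ℂ) • v := by rw [hu'def]; abel
    have h2 : w = w' + (inner ℂ v w : ℂ) • v := by rw [hw'def]; abel
    conv_lhs => rw [h1, h2]
    rw [inner_add_left, inner_add_right, inner_add_right, inner_smul_left, inner_smul_right,
      inner_smul_left, inner_smul_right, hu'v, hvw', hvv, inner_conj_symm]
    ring
  have hnu' : ‖u'‖ = Real.sqrt (1 - ‖(inner ℂ u v : ℂ)‖ ^ 2) := by
    rw [← norm_orth u v hu hv, ← hu'def, Real.sqrt_sq (norm_nonneg _)]
  have hnw' : ‖w'‖ = Real.sqrt (1 - ‖(inner ℂ v w : ℂ)‖ ^ 2) := by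
    have := norm_orth w v hw hv
    rw [norm_inner_symm] at this
    have heq : w - (inner ℂ v w : ℂ) • v = w' := rfl
    rw [← this, heq, Real.sqrt_sq (norm_nonneg _)]
  have hCS : ‖(inner ℂ u' w' : ℂ)‖ ≤ ‖u'‖ * ‖w'‖ := norm_inner_le_norm u' w'
  have htri : ‖(inner ℂ u v : ℂ) * (inner ℂ v w : ℂ)‖ - ‖(inner ℂ u' w' : ℂ)‖ ≤ ‖(inner ℂ u w : ℂ)‖ := by
    rw [hdecomp]
    have h2 := norm_sub_le (inner ℂ u' w' + (inner ℂ u v : ℂ) * (inner ℂ v w : ℂ)) (inner ℂ u' w' : ℂ)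
    rw [add_sub_cancel_left] at h2
    linarith
  rw [norm_mul] at htri
  rw [hnu', hnw'] at hCS
  linarith

lemma qA_triangle_unit (u v w : H) (hu : ‖u‖ = 1) (hv : ‖v‖ = 1) (hw : ‖w‖ = 1) :
    qA u w ≤ qA u v + qA v w := by
  have hdenom : ∀ a b : H, ‖a‖ = 1 → ‖b‖ = 1 → ‖(inner ℂ a b : ℂ)‖ / (‖a‖ * ‖b‖) = ‖(inner ℂ a b : ℂ)‖ := by
    intro a b ha hb; rw [ha, hb]; simp
  unfold qA
  rw [hdenom u v hu hv, hdenom v w hv hw, hdenom u w hu hw]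
  set a := ‖(inner ℂ u v : ℂ)‖ with hadef
  set b := ‖(inner ℂ v w : ℂ)‖ with hbdef
  set c := ‖(inner ℂ u w : ℂ)‖ with hcdef
  have ha1 : a ≤ 1 := by rw [hadef]; have := norm_inner_le_norm (𝕜 := ℂ) u v; rw [hu, hv] at this; simpa
  have hb1 : b ≤ 1 := by rw [hbdef]; have := norm_inner_le_norm (𝕜 := ℂ) v w; rw [hv, hw] at this; simpa
  have hc1 : c ≤ 1 := by rw [hcdef]; have := norm_inner_le_norm (𝕜 := ℂ) u w; rw [hu, hw] at this; simpa
  have ha0 : 0 ≤ a := norm_nonneg _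
  have hb0 : 0 ≤ b := norm_nonneg _
  set A := Real.arccos a with hAdef
  set B := Real.arccos b with hBdef
  have hA2 : A ≤ Real.pi / 2 := Real.arccos_le_pi_div_two.mpr ha0
  have hB2 : B ≤ Real.pi / 2 := Real.arccos_le_pi_div_two.mpr hb0
  have hA0 : 0 ≤ A := Real.arccos_nonneg a
  have hB0 : 0 ≤ B := Real.arccos_nonneg b
  have hcos : Real.cos (A + B) = a * b - Real.sqrt (1 - a ^ 2) * Real.sqrt (1 - b ^ 2) := by
    rw [Real.cos_add, hAdef, hBdef, Real.cos_arccos (by linarith) ha1,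
      Real.cos_arccos (by linarith) hb1, Real.sin_arccos, Real.sin_arccos]
  have hkey : Real.cos (A + B) ≤ c := by
    rw [hcos]; exact key_ineq u v w hu hv hw
  calc Real.arccos c ≤ Real.arccos (Real.cos (A + B)) := arccos_anti hkey
    _ = A + B := Real.arccos_cos (by linarith) (by linarith [Real.pi_pos])

lemma qA_triangle (u v w : H) (hu : u ≠ 0) (hv : v ≠ 0) (hw : w ≠ 0) :
    qA u w ≤ qA u v + qA v w := by
  have norm1 : ∀ a : H, a ≠ 0 → ‖((‖a‖⁻¹ : ℝ) : ℂ) • a‖ = 1 := by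
    intro a ha
    rw [norm_smul, Complex.norm_real, Real.norm_eq_abs, abs_inv, abs_norm]
    exact inv_mul_cancel₀ (norm_ne_zero_iff.mpr ha)
  have hcast : ∀ a : H, a ≠ 0 → ((‖a‖⁻¹ : ℝ) : ℂ) ≠ 0 := by
    intro a ha
    simp [Complex.ofReal_ne_zero, norm_ne_zero_iff.mpr ha]
  have hrw : ∀ a b : H, (ha : a ≠ 0) → (hb : b ≠ 0) →
      qA a b = qA (((‖a‖⁻¹ : ℝ) : ℂ) • a) (((‖b‖⁻¹ : ℝ) : ℂ) • b) := by
    intro a b ha hb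
    rw [qA_smul_left _ _ _ (hcast a ha), qA_smul_right _ _ _ (hcast b hb)]
  rw [hrw u w hu hw, hrw u v hu hv, hrw v w hv hw]
  exact qA_triangle_unit _ _ _ (norm1 u hu) (norm1 v hv) (norm1 w hw)

lemma qAngle_triangle (x y z : Projectivization ℂ H) :
    qAngle x z ≤ qAngle x y + qAngle y z := by
  simp only [qAngle_eq_qA]
  exact qA_triangle _ _ _ x.rep_nonzero y.rep_nonzero z.rep_nonzero

lemma seq_compact_in_alphaSet [FiniteDimensional ℂ H]
    (T : Set (Projectivization ℂ H))
    (hclosed : ∀ x : Projectivization ℂ H,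
      (∀ ε : ℝ, 0 < ε → ∃ y ∈ T, qAngle x y < ε) → x ∈ T)
    (u : ℕ → Projectivization ℂ H) (hu : ∀ n, u n ∈ T) :
    ∃ x ∈ T, ∃ g : ℕ → ℕ, StrictMono g ∧
      Filter.Tendsto (fun n => qAngle (u (g n)) x) Filter.atTop (nhds 0) := by
  set vn : ℕ → H := fun n => ((‖(u n).rep‖⁻¹ : ℝ) : ℂ) • (u n).rep with hvn
  have hrepne : ∀ n, (‖(u n).rep‖⁻¹ : ℝ) ≠ 0 := fun n =>
    inv_ne_zero (norm_ne_zero_iff.mpr (u n).rep_nonzero)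
  have hvnnorm : ∀ n, ‖vn n‖ = 1 := by
    intro n
    rw [hvn]
    simp only [norm_smul, Complex.norm_real, Real.norm_eq_abs, abs_inv, abs_norm]
    exact inv_mul_cancel₀ (norm_ne_zero_iff.mpr (u n).rep_nonzero)
  have hsub : ∀ n, vn n ∈ Metric.sphere (0 : H) 1 := by
    intro n
    simp [mem_sphere_iff_norm, hvnnorm n]
  obtain ⟨v, hvmem, g, hg, hconv⟩ := (isCompact_sphere (0 : H) 1).tendsto_subseq hsub
  have hvnorm : ‖v‖ = 1 := by simpa [mem_sphere_iff_norm] using hvmem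
  have hv0 : v ≠ 0 := by
    intro h; rw [h, norm_zero] at hvnorm; norm_num at hvnorm
  have hconv' : Filter.Tendsto (fun n => vn (g n)) Filter.atTop (nhds v) := hconv
  have hfun : ∀ n, qAngle (u (g n)) (Projectivization.mk ℂ v hv0) = qA (vn (g n)) v := by
    intro n
    conv_lhs => rw [← Projectivization.mk_rep (u (g n))]
    rw [qAngle_mk_s14 _ _ _ hv0, hvn]
    exact (qA_smul_left _ _ _ (by exact_mod_cast Complex.ofReal_ne_zero.mpr (hrepne (g n)))).symm
  have hinner : Filter.Tendsto (fun n => (inner ℂ (vn (g n)) v : ℂ)) Filter.atTop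
      (nhds (inner ℂ v v : ℂ)) := hconv'.inner tendsto_const_nhds
  have hvv : (inner ℂ v v : ℂ) = 1 := by
    rw [inner_self_eq_norm_sq_to_K, hvnorm]; norm_num
  have hnormtend : Filter.Tendsto (fun n => ‖(inner ℂ (vn (g n)) v : ℂ)‖) Filter.atTop (nhds 1) := by
    have := hinner.norm
    rwa [hvv, norm_one] at this
  have hdenomtend : Filter.Tendsto (fun n => ‖vn (g n)‖ * ‖v‖) Filter.atTop (nhds 1) := by
    simpa [hvnorm] using hconv'.norm.mul (tendsto_const_nhds (x := ‖v‖))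
  have hratio : Filter.Tendsto (fun n => ‖(inner ℂ (vn (g n)) v : ℂ)‖ / (‖vn (g n)‖ * ‖v‖))
      Filter.atTop (nhds 1) := by
    have := hnormtend.div hdenomtend one_ne_zero
    rwa [div_one] at this
  have htend : Filter.Tendsto (fun n => qAngle (u (g n)) (Projectivization.mk ℂ v hv0))
      Filter.atTop (nhds 0) := by
    have harc : Filter.Tendsto (fun n => Real.arccos
        (‖(inner ℂ (vn (g n)) v : ℂ)‖ / (‖vn (g n)‖ * ‖v‖))) Filter.atTop
        (nhds (Real.arccos 1)) :=
      (Real.continuous_arccos.continuousAt.tendsto).comp hratio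
    rw [Real.arccos_one] at harc
    simpa only [hfun, qA] using harc
  refine ⟨Projectivization.mk ℂ v hv0, ?_, g, hg, htend⟩
  apply hclosed
  intro ε hε
  obtain ⟨n, hn⟩ := (htend.eventually (gt_mem_nhds hε)).exists
  exact ⟨u (g n), hu (g n), by rwa [qAngle_symm]⟩

/-- α-sets are closed; in dimension three, highly-α-symmetric sets are
compact and contain a non-isolated point. Closedness, compactness (sequential) and
isolatedness are phrased explicitly in terms of the quantum-angle metric. -/
theorem alphaSet_closed_and_highly_symmetric_compact
    (hdim : 3 ≤ Module.rank ℂ H)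
    (α : ℝ) (hα₁ : Real.pi / 4 < α) (hα₂ : α < Real.pi / 2) :
    (∀ S : Set (Projectivization ℂ H), ∀ x : Projectivization ℂ H,
      (∀ ε : ℝ, 0 < ε → ∃ y ∈ alphaSet α S, qAngle x y < ε) → x ∈ alphaSet α S) ∧
    (Module.rank ℂ H = 3 →
      ∀ T : Set (Projectivization ℂ H), IsHighlyAlphaSymmetric α T →
        (∀ u : ℕ → Projectivization ℂ H, (∀ n, u n ∈ T) →
          ∃ x ∈ T, ∃ g : ℕ → ℕ, StrictMono g ∧
            Filter.Tendsto (fun n => qAngle (u (g n)) x) Filter.atTop (nhds 0)) ∧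
        (∃ x ∈ T, ∀ ε : ℝ, 0 < ε → ∃ y ∈ T, y ≠ x ∧ qAngle y x < ε)) := by

  have closed : ∀ S : Set (Projectivization ℂ H), ∀ x : Projectivization ℂ H,
      (∀ ε : ℝ, 0 < ε → ∃ y ∈ alphaSet α S, qAngle x y < ε) → x ∈ alphaSet α S := by
    intro S x hx y hy
    by_contra hne
    have hd : 0 < |qAngle x y - α| := abs_pos.mpr (sub_ne_zero.mpr hne)
    obtain ⟨z, hzS, hz⟩ := hx _ hd
    have hzy : qAngle z y = α := hzS y hy
    have h1 : qAngle x y ≤ qAngle x z + qAngle z y := qAngle_triangle x z y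
    have h2 : qAngle z y ≤ qAngle z x + qAngle x y := qAngle_triangle z x y
    rw [qAngle_symm z x] at h2
    rw [hzy] at h1 h2
    have : |qAngle x y - α| ≤ qAngle x z := abs_sub_le_iff.mpr ⟨by linarith, by linarith⟩
    linarith
  refine ⟨closed, ?_⟩
  intro hrank T hT
  obtain ⟨hTinf, -, hTrip⟩ := hT
  obtain ⟨S₀, hS₀T, hS₀fin, hS₀card⟩ := hTinf.exists_subset_ncard_eq 3
  have hTeq : alphaSet α (alphaSet α S₀) = T := hTrip S₀ hS₀T hS₀card
  have : FiniteDimensional ℂ H := Module.finite_of_rank_eq_nat (by exact_mod_cast hrank)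
  have hTclosed : ∀ x : Projectivization ℂ H,
      (∀ ε : ℝ, 0 < ε → ∃ y ∈ T, qAngle x y < ε) → x ∈ T := by
    intro x hx
    rw [← hTeq] at hx ⊢
    exact closed _ x hx
  have seq := seq_compact_in_alphaSet T hTclosed
  refine ⟨seq, ?_⟩
  set e := hTinf.natEmbedding
  set u : ℕ → Projectivization ℂ H := fun n => (e n : Projectivization ℂ H) with hudef
  have huT : ∀ n, u n ∈ T := fun n => (e n).2
  have huinj : Function.Injective u := fun m n h => e.injective (Subtype.ext h)
  obtain ⟨x, hxT, g, hg, htend⟩ := seq u huT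
  refine ⟨x, hxT, ?_⟩
  intro ε hε
  obtain ⟨N, hN⟩ := (Filter.eventually_atTop.mp (htend.eventually (gt_mem_nhds hε)))
  by_cases hcase : u (g N) = x
  · refine ⟨u (g (N + 1)), huT _, ?_, hN _ (Nat.le_succ N)⟩
    intro hcontra
    have : g (N + 1) = g N := huinj (hcontra.trans hcase.symm)
    exact absurd this (Nat.ne_of_gt (hg (Nat.lt_succ_self N)))
  · exact ⟨u (g N), huT _, hcase, hN N le_rfl⟩
end
end

section
/- Let H be a complex Hilbert space with dim H = 3, fix π/4 < α < π/2 and set a := cos α. Let c ≥ d > 0 with c² + d² = 1, let λ₁, λ₂, λ₃ be pairwise different complex numbers of modulus 1, let {e₁, e₂} ⊆ H be an orthonormal system, set S₀ := {[c·e₁ + λ_j·d·e₂] : j = 1, 2, 3}, and let e₃ be a unit vector orthogonal to e₁ and e₂. If either c/√(1+c²) ≥ a > d, or (a,c,d) = (1/√3, √(2/3), 1/√3), or (a,c,d) = (1/√3, 1/√2, 1/√2), then S₀^⟨⟨α⟩⟩ is the disjoint union of the circle {[c·e₁ + λ·d·e₂] : λ ∈ ℂ, |λ| = 1} and the set {[√(1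 − a²/(1 − a²/c²))·e₂ + λ·(a/√(1 − a²/c²))·e₃] : λ ∈ ℂ, |λ| = 1}. -/
noncomputable section
open ComplexConjugate

variable {H : Type*} [NormedAddCommGroup H] [InnerProductSpace ℂ H]

/-! ### Auxiliary lemmas -/

lemma sq_inj_aux {s t : ℝ} (hs : 0 ≤ s) (ht : 0 ≤ t) (h : s ^ 2 = t ^ 2) : s = t := by
  have h1 : (s - t) * (s + t) = 0 := by linear_combination h
  rcases mul_eq_zero.1 h1 with h2 | h2
  · linarith
  · have hs0 : s = 0 := by linarith
    have ht0 : t = 0 := by linarith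
    rw [hs0, ht0]

lemma quad_three_roots_s15 (A B C z₁ z₂ z₃ : ℂ)
    (h12 : z₁ ≠ z₂) (h13 : z₁ ≠ z₃) (h23 : z₂ ≠ z₃)
    (h1 : A * z₁ ^ 2 + B * z₁ + C = 0)
    (h2 : A * z₂ ^ 2 + B * z₂ + C = 0)
    (h3 : A * z₃ ^ 2 + B * z₃ + C = 0) : A = 0 := by
  have e12 : (z₁ - z₂) * (A * (z₁ + z₂) + B) = 0 := by linear_combination h1 - h2
  have e13 : (z₁ - z₃) * (A * (z₁ + z₃) + B) = 0 := by linear_combination h1 - h3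
  have f12 : A * (z₁ + z₂) + B = 0 :=
    (mul_eq_zero.1 e12).resolve_left (sub_ne_zero.2 h12)
  have f13 : A * (z₁ + z₃) + B = 0 :=
    (mul_eq_zero.1 e13).resolve_left (sub_ne_zero.2 h13)
  have : A * (z₂ - z₃) = 0 := by linear_combination f12 - f13
  exact (mul_eq_zero.1 this).resolve_right (sub_ne_zero.2 h23)

lemma unit_three_constant (A B : ℂ) (r : ℝ) (ν₁ ν₂ ν₃ : ℂ)
    (hu1 : ‖ν₁‖ = 1) (hu2 : ‖ν₂‖ = 1) (hu3 : ‖ν₃‖ = 1)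
    (h12 : ν₁ ≠ ν₂) (h13 : ν₁ ≠ ν₃) (h23 : ν₂ ≠ ν₃)
    (h1 : ‖A + ν₁ * B‖ = r) (h2 : ‖A + ν₂ * B‖ = r) (h3 : ‖A + ν₃ * B‖ = r) :
    A = 0 ∨ B = 0 := by
  have key : ∀ ν : ℂ, ‖ν‖ = 1 → ‖A + ν * B‖ = r →
      (conj A * B) * ν ^ 2 + (conj A * A + conj B * B - ((r : ℝ) : ℂ) ^ 2) * ν
        + A * conj B = 0 := by
    intro ν hν h
    have hz : (A + ν * B) * (conj A + conj ν * conj B) = ((r : ℝ) : ℂ) ^ 2 := by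
      rw [← map_mul, ← map_add, Complex.mul_conj, Complex.normSq_eq_norm_sq, h]
      push_cast; ring
    have hν2 : ν * conj ν = 1 := by
      rw [Complex.mul_conj, Complex.normSq_eq_norm_sq, hν]; norm_num
    linear_combination ν * hz - (A * conj B + ν * (B * conj B)) * hν2
  have hA : conj A * B = 0 :=
    quad_three_roots_s15 _ _ _ ν₁ ν₂ ν₃ h12 h13 h23 (key ν₁ hu1 h1) (key ν₂ hu2 h2) (key ν₃ hu3 h3)
  rcases mul_eq_zero.1 hA with h | h
  · left; simpa using congrArg conj h
  · right; exact h

lemma qAngle_mk_unit (u v : H) (hu : ‖u‖ = 1) (hv : ‖v‖ = 1) (hu0 : u ≠ 0) (hv0 : v ≠ 0) :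
    qAngle (Projectivization.mk ℂ u hu0) (Projectivization.mk ℂ v hv0)
      = Real.arccos ‖(inner ℂ u v : ℂ)‖ := by
  unfold qAngle
  obtain ⟨t, ht⟩ := Projectivization.exists_smul_eq_mk_rep ℂ u hu0
  obtain ⟨s, hs⟩ := Projectivization.exists_smul_eq_mk_rep ℂ v hv0
  rw [← ht, ← hs]
  have htn : ‖(t : ℂ)‖ ≠ 0 := by simp [Units.ne_zero t]
  have hsn : ‖(s : ℂ)‖ ≠ 0 := by simp [Units.ne_zero s]
  simp only [Units.smul_def, inner_smul_left, inner_smul_right, norm_smul, norm_mul,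
    RCLike.norm_conj, hu, hv, mul_one]
  congr 1
  field_simp

lemma qAngle_eq_iff_s15 (α : ℝ) (hα0 : 0 ≤ α) (hαπ : α ≤ Real.pi)
    (u v : H) (hu : ‖u‖ = 1) (hv : ‖v‖ = 1) (hu0 : u ≠ 0) (hv0 : v ≠ 0) :
    qAngle (Projectivization.mk ℂ u hu0) (Projectivization.mk ℂ v hv0) = α ↔
      ‖(inner ℂ u v : ℂ)‖ = Real.cos α := by
  rw [qAngle_mk_unit u v hu hv hu0 hv0]
  constructor
  · intro h
    rw [← h, Real.cos_arccos]
    · exact le_trans (by norm_num) (norm_nonneg _)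
    · calc ‖(inner ℂ u v : ℂ)‖ ≤ ‖u‖ * ‖v‖ := norm_inner_le_norm u v
        _ = 1 := by rw [hu, hv, mul_one]
  · intro h
    rw [h, Real.arccos_cos hα0 hαπ]

lemma submodule_eq_iff (P : Projectivization ℂ H) (w : H) (hw : w ≠ 0) :
    P.submodule = Submodule.span ℂ {w} ↔ P = Projectivization.mk ℂ w hw := by
  constructor
  · intro h
    apply Projectivization.submodule_injective
    rw [h, Projectivization.submodule_mk]
  · intro h
    rw [h, Projectivization.submodule_mk]

lemma exists_unit_rep (P : Projectivization ℂ H) :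
    ∃ (u : H) (hu0 : u ≠ 0), ‖u‖ = 1 ∧ P = Projectivization.mk ℂ u hu0 := by
  have h0 := P.rep_nonzero
  have hn : ‖P.rep‖ ≠ 0 := norm_ne_zero_iff.2 h0
  refine ⟨(‖P.rep‖ : ℂ)⁻¹ • P.rep, ?_, ?_, ?_⟩
  · simp [smul_eq_zero, h0, hn]
  · rw [norm_smul]
    simp [hn, abs_of_nonneg (norm_nonneg P.rep)]
  · conv_lhs => rw [← P.mk_rep]
    rw [Projectivization.mk_eq_mk_iff']
    refine ⟨(‖P.rep‖ : ℂ), ?_⟩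
    rw [smul_smul, mul_inv_cancel₀ (by exact_mod_cast hn), one_smul]

section triple
variable (e₁ e₂ e₃ : H) (he₁ : ‖e₁‖ = 1) (he₂ : ‖e₂‖ = 1) (he₃ : ‖e₃‖ = 1)
  (he₁₂ : (inner ℂ e₁ e₂ : ℂ) = 0) (he₁₃ : (inner ℂ e₁ e₃ : ℂ) = 0)
  (he₂₃ : (inner ℂ e₂ e₃ : ℂ) = 0)

include he₁ he₂ he₃ he₁₂ he₁₃ he₂₃ in
lemma inner_expand (x y z x' y' z' : ℂ) :
    (inner ℂ (x•e₁+y•e₂+z•e₃) (x'•e₁+y'•e₂+z'•e₃) : ℂ)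
      = conj x * x' + conj y * y' + conj z * z' := by
  have h21 : (inner ℂ e₂ e₁ : ℂ) = 0 := by rw [← inner_conj_symm, he₁₂, map_zero]
  have h31 : (inner ℂ e₃ e₁ : ℂ) = 0 := by rw [← inner_conj_symm, he₁₃, map_zero]
  have h32 : (inner ℂ e₃ e₂ : ℂ) = 0 := by rw [← inner_conj_symm, he₂₃, map_zero]
  have h11 : (inner ℂ e₁ e₁ : ℂ) = 1 := by
    rw [inner_self_eq_norm_sq_to_K, he₁]; norm_num
  have h22 : (inner ℂ e₂ e₂ : ℂ) = 1 := by
    rw [inner_self_eq_norm_sq_to_K, he₂]; norm_num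
  have h33 : (inner ℂ e₃ e₃ : ℂ) = 1 := by
    rw [inner_self_eq_norm_sq_to_K, he₃]; norm_num
  simp only [inner_add_left, inner_add_right, inner_smul_left, inner_smul_right,
    he₁₂, he₁₃, he₂₃, h21, h31, h32, h11, h22, h33, mul_zero, mul_one, add_zero, zero_add]
  ring

include he₁ he₂ he₃ he₁₂ he₁₃ he₂₃ in
lemma norm_expand (x y z : ℂ) :
    ‖x•e₁+y•e₂+z•e₃‖^2 = ‖x‖^2+‖y‖^2+‖z‖^2 := by
  have h := inner_expand e₁ e₂ e₃ he₁ he₂ he₃ he₁₂ he₁₃ he₂₃ x y z x y z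
  rw [inner_self_eq_norm_sq_to_K] at h
  have h2 : ((‖x‖^2+‖y‖^2+‖z‖^2 : ℝ) : ℂ) = conj x * x + conj y * y + conj z * z := by
    rw [← Complex.normSq_eq_conj_mul_self, ← Complex.normSq_eq_conj_mul_self,
      ← Complex.normSq_eq_conj_mul_self]
    simp only [Complex.normSq_eq_norm_sq]
    push_cast
    ring
  have h3 := h.trans h2.symm
  exact Complex.ofReal_inj.mp (by push_cast at h3 ⊢; exact h3)

include he₁ he₂ he₃ he₁₂ he₁₃ he₂₃ in
lemma exists_decomp (hdim : Module.rank ℂ H = 3) (v : H) :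
    ∃ x y z : ℂ, v = x•e₁+y•e₂+z•e₃ := by
  have hfd : FiniteDimensional ℂ H := by
    apply FiniteDimensional.of_rank_eq_nat (n := 3)
    exact_mod_cast hdim
  have hfr : Module.finrank ℂ H = 3 := by
    exact Module.finrank_eq_of_rank_eq (n := 3) (by exact_mod_cast hdim)
  set e : Fin 3 → H := ![e₁, e₂, e₃] with he
  have horth : Orthonormal ℂ e := by
    rw [orthonormal_iff_ite]
    intro i j
    fin_cases i <;> fin_cases j <;>
      simp [he, inner_self_eq_norm_sq_to_K, he₁, he₂, he₃, he₁₂, he₁₃, he₂₃] <;>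
      first
        | (rw [← inner_conj_symm]; simp [he₁₂, he₁₃, he₂₃])
        | norm_num
  have hli := horth.linearIndependent
  have hsp : Submodule.span ℂ (Set.range e) = ⊤ :=
    LinearIndependent.span_eq_top_of_card_eq_finrank hli (by simp [hfr])
  have hv : v ∈ Submodule.span ℂ (Set.range e) := by rw [hsp]; trivial
  rw [Finsupp.mem_span_range_iff_exists_finsupp] at hv
  obtain ⟨cf, hcf⟩ := hv
  refine ⟨cf 0, cf 1, cf 2, ?_⟩
  rw [← hcf, Finsupp.sum_fintype _ _ (by simp)]
  simp [Fin.sum_univ_three, he]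

end triple
set_option maxHeartbeats 2000000 in
/-- double-α-set of a collinear triple in dimension three, exceptional cases. -/
theorem double_alphaSet_dim_three_exceptional
    (hdim : Module.rank ℂ H = 3)
    (α : ℝ) (hα₁ : Real.pi / 4 < α) (hα₂ : α < Real.pi / 2)
    (a : ℝ) (ha : a = Real.cos α)
    (c d : ℝ) (hdc : d ≤ c) (hd : 0 < d) (hcd : c ^ 2 + d ^ 2 = 1)
    (lam : Fin 3 → ℂ) (hlam : ∀ j, ‖lam j‖ = 1) (hinj : Function.Injective lam)
    (e₁ e₂ e₃ : H) (he₁ : ‖e₁‖ = 1) (he₂ : ‖e₂‖ = 1) (he₃ : ‖e₃‖ = 1)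
    (he₁₂ : (inner ℂ e₁ e₂ : ℂ) = 0) (he₁₃ : (inner ℂ e₁ e₃ : ℂ) = 0)
    (he₂₃ : (inner ℂ e₂ e₃ : ℂ) = 0)
    (S₀ : Set (Projectivization ℂ H))
    (hS₀ : S₀ = {x | ∃ j : Fin 3,
      x.submodule = Submodule.span ℂ {(c : ℂ) • e₁ + (lam j * d) • e₂}})
    (hcase : (a ≤ c / Real.sqrt (1 + c ^ 2) ∧ d < a) ∨
      (a = 1 / Real.sqrt 3 ∧ c = Real.sqrt (2 / 3) ∧ d = 1 / Real.sqrt 3) ∨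
      (a = 1 / Real.sqrt 3 ∧ c = 1 / Real.sqrt 2 ∧ d = 1 / Real.sqrt 2)) :
    alphaSet α (alphaSet α S₀) =
      circleSet e₁ e₂ c d ∪
        {x | ∃ mu : ℂ, ‖mu‖ = 1 ∧ x.submodule = Submodule.span ℂ
          {((Real.sqrt (1 - a ^ 2 / (1 - a ^ 2 / c ^ 2)) : ℝ) : ℂ) • e₂ +
            (mu * ((a / Real.sqrt (1 - a ^ 2 / c ^ 2) : ℝ) : ℂ)) • e₃}} ∧
    Disjoint (circleSet e₁ e₂ c d)
      {x : Projectivization ℂ H | ∃ mu : ℂ, ‖mu‖ = 1 ∧ x.submodule = Submodule.span ℂ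
        {((Real.sqrt (1 - a ^ 2 / (1 - a ^ 2 / c ^ 2)) : ℝ) : ℂ) • e₂ +
          (mu * ((a / Real.sqrt (1 - a ^ 2 / c ^ 2) : ℝ) : ℂ)) • e₃}} := by
  subst hS₀
  have hπ := Real.pi_pos
  have hα0 : 0 ≤ α := by linarith
  have hαπ : α ≤ Real.pi := by linarith
  have ha0 : 0 < a := by
    rw [ha]
    apply Real.cos_pos_of_mem_Ioo
    rw [Set.mem_Ioo]
    constructor <;> linarith
  have hc : 0 < c := lt_of_lt_of_le hd hdc
  have ha12 : a ^ 2 < 1 / 2 := by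
    have h1 : a < Real.sqrt 2 / 2 := by
      rw [ha, ← Real.cos_pi_div_four]
      exact Real.cos_lt_cos_of_nonneg_of_le_pi (by positivity) hαπ hα₁
    nlinarith [Real.sq_sqrt (by norm_num : (0:ℝ) ≤ 2), Real.sqrt_nonneg 2]
  have hc2 : 1 / 2 ≤ c ^ 2 := by nlinarith
  have hac : a < c := by nlinarith
  have hsqrt3 : Real.sqrt 3 ^ 2 = 3 := Real.sq_sqrt (by norm_num)
  have hsqrt3pos : 0 < Real.sqrt 3 := Real.sqrt_pos.2 (by norm_num)
  have hsqrt2 : Real.sqrt 2 ^ 2 = 2 := Real.sq_sqrt (by norm_num)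
  have hsqrt2pos : 0 < Real.sqrt 2 := Real.sqrt_pos.2 (by norm_num)
  -- numeric values in each case
  have hkey' : a ^ 2 * c ^ 2 + a ^ 2 ≤ c ^ 2 := by
    rcases hcase with ⟨h1, _⟩ | ⟨ha', hc', _⟩ | ⟨ha', hc', _⟩
    · have hs : 0 < Real.sqrt (1 + c ^ 2) := Real.sqrt_pos.2 (by positivity)
      have hs2 : Real.sqrt (1 + c ^ 2) ^ 2 = 1 + c ^ 2 := Real.sq_sqrt (by positivity)
      have h2 : a ^ 2 ≤ (c / Real.sqrt (1 + c ^ 2)) ^ 2 := by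
        have := mul_self_le_mul_self ha0.le h1
        nlinarith
      rw [div_pow, hs2] at h2
      have h3 : a ^ 2 * (1 + c ^ 2) ≤ c ^ 2 := by
        rw [le_div_iff₀ (by positivity)] at h2
        linarith
      nlinarith
    · have ha2 : a ^ 2 = 1 / 3 := by rw [ha', div_pow, one_pow, hsqrt3]
      have hc2' : c ^ 2 = 2 / 3 := by rw [hc']; exact Real.sq_sqrt (by norm_num)
      rw [ha2, hc2']; norm_num
    · have ha2 : a ^ 2 = 1 / 3 := by rw [ha', div_pow, one_pow, hsqrt3]
      have hc2' : c ^ 2 = 1 / 2 := by rw [hc', div_pow, one_pow, hsqrt2]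
      rw [ha2, hc2']; norm_num
  have hkey : a ^ 2 ≤ 1 - a ^ 2 / c ^ 2 := by
    have h1 : a ^ 2 / c ^ 2 ≤ 1 - a ^ 2 := by
      rw [div_le_iff₀ (by positivity)]; nlinarith
    linarith
  set β := Real.sqrt (1 - a ^ 2 / c ^ 2) with hβdef
  have hβ2 : β ^ 2 = 1 - a ^ 2 / c ^ 2 := Real.sq_sqrt (by nlinarith)
  have hβ0 : 0 < β := Real.sqrt_pos.2 (by nlinarith)
  set qq := a / β with hqqdef
  set pp := Real.sqrt (1 - a ^ 2 / (1 - a ^ 2 / c ^ 2)) with hppdef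
  have hqq0 : 0 < qq := div_pos ha0 hβ0
  have hqq2 : qq ^ 2 = a ^ 2 / (1 - a ^ 2 / c ^ 2) := by rw [hqqdef, div_pow, hβ2]
  have hqq1 : qq ≤ 1 := by
    rw [hqqdef, div_le_one hβ0]
    calc a = Real.sqrt (a ^ 2) := (Real.sqrt_sq ha0.le).symm
      _ ≤ β := Real.sqrt_le_sqrt hkey
  have hrad : 0 ≤ 1 - a ^ 2 / (1 - a ^ 2 / c ^ 2) := by
    rw [← hqq2]; nlinarith
  have hpp2 : pp ^ 2 = 1 - qq ^ 2 := by rw [hppdef, Real.sq_sqrt hrad, hqq2]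
  have hpp0 : 0 ≤ pp := Real.sqrt_nonneg _
  have haβ : a = qq * β := by rw [hqqdef]; field_simp
  -- infrastructure
  have hIP := inner_expand e₁ e₂ e₃ he₁ he₂ he₃ he₁₂ he₁₃ he₂₃
  have hNE := norm_expand e₁ e₂ e₃ he₁ he₂ he₃ he₁₂ he₁₃ he₂₃
  have hdecomp := exists_decomp e₁ e₂ e₃ he₁ he₂ he₃ he₁₂ he₁₃ he₂₃ hdim
  have hunit : ∀ x y z : ℂ, ‖x‖ ^ 2 + ‖y‖ ^ 2 + ‖z‖ ^ 2 = 1 →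
      ‖x • e₁ + y • e₂ + z • e₃‖ = 1 := by
    intro x y z h
    have h2 := hNE x y z
    rw [h] at h2
    exact sq_inj_aux (norm_nonneg _) (by norm_num) (by rw [h2]; norm_num)
  have hnz : ∀ v : H, ‖v‖ = 1 → v ≠ 0 := by
    intro v h h0
    rw [h0, norm_zero] at h
    norm_num at h
  have hqA : ∀ (u v : H) (hu0 : u ≠ 0) (hv0 : v ≠ 0), ‖u‖ = 1 → ‖v‖ = 1 →
      (qAngle (Projectivization.mk ℂ u hu0) (Projectivization.mk ℂ v hv0) = α ↔
        ‖(inner ℂ u v : ℂ)‖ = a) := by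
    intro u v hu0 hv0 hu hv
    rw [ha]
    exact qAngle_eq_iff_s15 α hα0 hαπ u v hu hv hu0 hv0
  have hcC : (c : ℂ) ≠ 0 := Complex.ofReal_ne_zero.2 hc.ne'
  have hdCne : (d : ℂ) ≠ 0 := Complex.ofReal_ne_zero.2 hd.ne'
  have hβC : ((β : ℝ) : ℂ) ≠ 0 := Complex.ofReal_ne_zero.2 hβ0.ne'
  have hqqC : ((qq : ℝ) : ℂ) ≠ 0 := Complex.ofReal_ne_zero.2 hqq0.ne'
  have hnR : ∀ r : ℝ, 0 ≤ r → ‖((r : ℝ) : ℂ)‖ = r := by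
    intro r hr
    rw [Complex.norm_real, Real.norm_of_nonneg hr]
  have hnconj : ∀ w : ℂ, ‖conj w‖ = ‖w‖ := fun w => RCLike.norm_conj w
  -- the vectors spanning the circle
  have hs3 : ∀ l : ℂ, (c : ℂ) • e₁ + (l * d) • e₂
      = (c : ℂ) • e₁ + (l * d) • e₂ + (0 : ℂ) • e₃ := by
    intro l; rw [zero_smul, add_zero]
  have hcu : ∀ l : ℂ, ‖l‖ = 1 → ‖(c : ℂ) • e₁ + (l * d) • e₂‖ = 1 := by
    intro l hl
    rw [hs3 l]
    apply hunit
    rw [norm_mul, hl, one_mul, hnR c hc.le, hnR d hd.le, norm_zero]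
    simpa using hcd
  have hsu : ∀ j, ‖(c : ℂ) • e₁ + (lam j * d) • e₂‖ = 1 := fun j => hcu (lam j) (hlam j)
  have hsnz : ∀ j, ((c : ℂ) • e₁ + (lam j * d) • e₂) ≠ 0 := fun j => hnz _ (hsu j)
  -- the vectors spanning the second set
  have hw3 : ∀ m : ℂ, ((pp : ℝ) : ℂ) • e₂ + (m * ((qq : ℝ) : ℂ)) • e₃
      = (0 : ℂ) • e₁ + ((pp : ℝ) : ℂ) • e₂ + (m * ((qq : ℝ) : ℂ)) • e₃ := by
    intro m; rw [zero_smul, zero_add]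
  have hwu : ∀ m : ℂ, ‖m‖ = 1 → ‖((pp : ℝ) : ℂ) • e₂ + (m * ((qq : ℝ) : ℂ)) • e₃‖ = 1 := by
    intro m hm
    rw [hw3 m]
    apply hunit
    rw [norm_mul, hm, one_mul, hnR pp hpp0, hnR qq hqq0.le, norm_zero]
    rw [hpp2]; ring
  refine ⟨?_, ?_⟩
  · ext P
    simp only [alphaSet, circleSet, Set.mem_setOf_eq, Set.mem_union]
    constructor
    · -- forward inclusion
      intro hP
      obtain ⟨u, hu0, hu1, hPu⟩ := exists_unit_rep P
      obtain ⟨X, Y, Z, huXYZ⟩ := hdecomp u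
      have hsum : ‖X‖ ^ 2 + ‖Y‖ ^ 2 + ‖Z‖ ^ 2 = 1 := by
        have h2 := hNE X Y Z
        rw [← huXYZ, hu1] at h2
        simpa using h2.symm
      have hmunit : ∀ m : ℂ, ‖m‖ = 1 →
          ‖((a/c : ℝ) : ℂ) • e₁ + (0 : ℂ) • e₂ + (m * ((β : ℝ) : ℂ)) • e₃‖ = 1 := by
        intro m hm
        apply hunit
        rw [hnR (a/c) (by positivity), norm_zero, norm_mul, hm, one_mul, hnR β hβ0.le,
          div_pow, hβ2]
        ring
      have hmangle : ∀ (m : ℂ) (hm : ‖m‖ = 1) (y : Projectivization ℂ H),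
          (∃ j : Fin 3, y.submodule
            = Submodule.span ℂ {(c : ℂ) • e₁ + (lam j * d) • e₂}) →
          qAngle (Projectivization.mk ℂ _ (hnz _ (hmunit m hm))) y = α := by
        rintro m hm y ⟨j, hj⟩
        rw [(submodule_eq_iff y _ (hsnz j)).1 hj]
        rw [hqA _ _ _ _ (hmunit m hm) (hsu j)]
        rw [hs3 (lam j), hIP]
        have hv : conj ((a/c : ℝ) : ℂ) * (c : ℂ) + conj (0 : ℂ) * (lam j * d)
            + conj (m * ((β : ℝ) : ℂ)) * 0 = ((a : ℝ) : ℂ) := by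
          rw [Complex.conj_ofReal]
          push_cast
          field_simp
          simp
        rw [hv, hnR a ha0.le]
      have hval : ∀ m : ℂ, ‖m‖ = 1 →
          ‖conj X * ((a/c : ℝ) : ℂ) + m * (conj Z * ((β : ℝ) : ℂ))‖ = a := by
        intro m hm
        have h3 := hP _ (hmangle m hm)
        rw [hPu] at h3
        rw [hqA u _ hu0 (hnz _ (hmunit m hm)) hu1 (hmunit m hm)] at h3
        rw [huXYZ, hIP] at h3
        have e : conj X * ((a/c : ℝ) : ℂ) + m * (conj Z * ((β : ℝ) : ℂ))
            = conj X * ((a/c : ℝ) : ℂ) + conj Y * 0 + conj Z * (m * ((β : ℝ) : ℂ)) := by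
          ring
        rw [e]
        exact h3
      have hIne1 : (1 : ℂ) ≠ Complex.I := by
        intro h
        simpa using congrArg Complex.re h
      have hIne2 : (-1 : ℂ) ≠ Complex.I := by
        intro h
        simpa using congrArg Complex.re h
      have hnormI : ‖Complex.I‖ = 1 := by
        rw [Complex.norm_I]
      have hABC := unit_three_constant (conj X * ((a/c : ℝ) : ℂ)) (conj Z * ((β : ℝ) : ℂ)) a
        1 (-1) Complex.I (by norm_num) (by norm_num) hnormI (by norm_num) hIne1 hIne2
        (hval 1 (by norm_num)) (hval (-1) (by norm_num)) (hval Complex.I hnormI)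
      have hacC : ((a/c : ℝ) : ℂ) ≠ 0 := Complex.ofReal_ne_zero.2 (div_pos ha0 hc).ne'
      rcases hABC with hA | hB
      · -- X = 0 : point of the second circle
        have hX : X = 0 := by
          have h := (mul_eq_zero.1 hA).resolve_right hacC
          simpa using congrArg conj h
        have hZnorm : ‖Z‖ = qq := by
          have h1 := hval 1 (by norm_num)
          rw [hX] at h1
          simp only [map_zero, zero_mul, zero_add, one_mul] at h1
          rw [norm_mul, hnconj, hnR β hβ0.le] at h1
          rw [hqqdef, ← h1]
          field_simp
        have hYnorm : ‖Y‖ = pp := by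
          apply sq_inj_aux (norm_nonneg _) hpp0
          rw [hpp2]
          have hXsq : ‖X‖ ^ 2 = 0 := by rw [hX, norm_zero]; norm_num
          have hZsq : ‖Z‖ ^ 2 = qq ^ 2 := by rw [hZnorm]
          linarith
        right
        by_cases hY : Y = 0
        · refine ⟨1, by norm_num, ?_⟩
          have hpp0' : pp = 0 := by rw [← hYnorm, hY, norm_zero]
          have hZne : Z ≠ 0 := by
            rw [← norm_ne_zero_iff, hZnorm]; exact hqq0.ne'
          rw [hPu, Projectivization.submodule_mk, huXYZ, hX, hY, hpp0']
          simp only [Complex.ofReal_zero, zero_smul, zero_add, one_mul]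
          rw [Submodule.span_singleton_smul_eq (isUnit_iff_ne_zero.2 hZne) e₃,
            Submodule.span_singleton_smul_eq (isUnit_iff_ne_zero.2 hqqC) e₃]
        · have hppos : 0 < pp := by
            rw [← hYnorm]; exact norm_pos_iff.2 hY
          have hppC : ((pp : ℝ) : ℂ) ≠ 0 := Complex.ofReal_ne_zero.2 hppos.ne'
          have hZne : Z ≠ 0 := by
            rw [← norm_ne_zero_iff, hZnorm]; exact hqq0.ne'
          refine ⟨Z * (pp : ℂ) / (Y * (qq : ℂ)), ?_, ?_⟩
          · rw [norm_div, norm_mul, norm_mul, hZnorm, hnR pp hpp0, hnR qq hqq0.le, hYnorm]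
            rw [mul_comm]
            exact div_self (by positivity)
          · rw [hPu, Projectivization.submodule_mk, huXYZ, hX]
            have hrw : (0 : ℂ) • e₁ + Y • e₂ + Z • e₃
                = (Y / (pp : ℂ)) • (((pp : ℝ) : ℂ) • e₂
                  + ((Z * (pp : ℂ) / (Y * (qq : ℂ))) * ((qq : ℝ) : ℂ)) • e₃) := by
              rw [zero_smul, zero_add, smul_add, smul_smul, smul_smul]
              congr 1
              · congr 1
                field_simp
              · congr 1
                field_simp
            rw [hrw, Submodule.span_singleton_smul_eq
              (isUnit_iff_ne_zero.2 (div_ne_zero hY hppC))]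
      · -- Z = 0 : point of the circle
        have hZ : Z = 0 := by
          have h := (mul_eq_zero.1 hB).resolve_right hβC
          simpa using congrArg conj h
        have hXnorm : ‖X‖ = c := by
          have h1 := hval 1 (by norm_num)
          rw [hZ] at h1
          simp only [map_zero, zero_mul, mul_zero, add_zero, one_mul] at h1
          rw [norm_mul, hnconj, hnR (a/c) (by positivity)] at h1
          have h2 : ‖X‖ = a / (a / c) :=
            eq_div_of_mul_eq (div_ne_zero ha0.ne' hc.ne') h1
          have h3' : a / (a / c) = c := by
            field_simp
          exact h2.trans h3'
        have hYnorm : ‖Y‖ = d := by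
          apply sq_inj_aux (norm_nonneg _) hd.le
          have hZsq : ‖Z‖ ^ 2 = 0 := by rw [hZ, norm_zero]; norm_num
          have hXsq : ‖X‖ ^ 2 = c ^ 2 := by rw [hXnorm]
          linarith
        left
        have hXne : X ≠ 0 := by
          rw [← norm_ne_zero_iff, hXnorm]; exact hc.ne'
        have hYne' : ‖Y‖ ≠ 0 := by rw [hYnorm]; exact hd.ne'
        have hYne : Y ≠ 0 := norm_ne_zero_iff.1 hYne'
        refine ⟨Y * (c : ℂ) / (X * (d : ℂ)), ?_, ?_⟩
        · rw [norm_div, norm_mul, norm_mul, hXnorm, hYnorm, hnR c hc.le, hnR d hd.le]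
          rw [mul_comm]
          exact div_self (by positivity)
        · rw [hPu, Projectivization.submodule_mk, huXYZ, hZ]
          have hrw : X • e₁ + Y • e₂ + (0 : ℂ) • e₃
              = (X / (c : ℂ)) • ((c : ℂ) • e₁
                + ((Y * (c : ℂ) / (X * (d : ℂ))) * (d : ℂ)) • e₂) := by
            rw [zero_smul, add_zero, smul_add, smul_smul, smul_smul]
            congr 1
            · congr 1
              field_simp
            · congr 1
              field_simp
          rw [hrw, Submodule.span_singleton_smul_eq
            (isUnit_iff_ne_zero.2 (div_ne_zero hXne hcC))]
    · -- backward inclusion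
      intro hP t ht
      obtain ⟨u, hu0, hu1, htu⟩ := exists_unit_rep t
      obtain ⟨X, Y, Z, huXYZ⟩ := hdecomp u
      have hsum : ‖X‖ ^ 2 + ‖Y‖ ^ 2 + ‖Z‖ ^ 2 = 1 := by
        have h2 := hNE X Y Z
        rw [← huXYZ, hu1] at h2
        simpa using h2.symm
      have hval : ∀ j : Fin 3,
          ‖conj X * (c : ℂ) + lam j * (conj Y * (d : ℂ))‖ = a := by
        intro j
        have h3 := ht (Projectivization.mk ℂ _ (hsnz j))
          ⟨j, by rw [Projectivization.submodule_mk]⟩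
        rw [htu] at h3
        rw [hqA u _ hu0 (hsnz j) hu1 (hsu j)] at h3
        rw [huXYZ, hs3 (lam j), hIP] at h3
        have e : conj X * (c : ℂ) + lam j * (conj Y * (d : ℂ))
            = conj X * (c : ℂ) + conj Y * (lam j * (d : ℂ)) + conj Z * 0 := by
          ring
        rw [e]
        exact h3
      have hd01 : lam 0 ≠ lam 1 := fun h => (by decide : ¬((0 : Fin 3) = 1)) (hinj h)
      have hd02 : lam 0 ≠ lam 2 := fun h => (by decide : ¬((0 : Fin 3) = 2)) (hinj h)
      have hd12 : lam 1 ≠ lam 2 := fun h => (by decide : ¬((1 : Fin 3) = 2)) (hinj h)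
      have hXY := unit_three_constant (conj X * (c : ℂ)) (conj Y * (d : ℂ)) a
        (lam 0) (lam 1) (lam 2) (hlam 0) (hlam 1) (hlam 2) hd01 hd02 hd12
        (hval 0) (hval 1) (hval 2)
      have hXY0 : X = 0 ∨ Y = 0 := by
        rcases hXY with h | h
        · left
          have := (mul_eq_zero.1 h).resolve_right hcC
          simpa using congrArg conj this
        · right
          have := (mul_eq_zero.1 h).resolve_right hdCne
          simpa using congrArg conj this
      -- norm facts in the two cases
      have hcaseX : X = 0 → d * ‖Y‖ = a := by
        intro hX
        have h1 := hval 0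
        rw [hX] at h1
        simp only [map_zero, zero_mul, zero_add] at h1
        rw [norm_mul, norm_mul, hlam 0, hnconj, hnR d hd.le, one_mul] at h1
        rw [← h1]; ring
      have hcaseY : Y = 0 → c * ‖X‖ = a := by
        intro hY
        have h1 := hval 0
        rw [hY] at h1
        simp only [map_zero, zero_mul, mul_zero, add_zero] at h1
        rw [norm_mul, hnconj, hnR c hc.le] at h1
        rw [← h1]; ring
      rcases hP with ⟨lam', hlam', hx1⟩ | ⟨mu, hmu, hx2⟩
      · -- P on the circle
        rw [(submodule_eq_iff P _ (hnz _ (hcu lam' hlam'))).1 hx1, htu]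
        rw [hqA _ u (hnz _ (hcu lam' hlam')) hu0 (hcu lam' hlam') hu1]
        rw [hs3 lam', huXYZ, hIP]
        rcases hXY0 with hX | hY
        · have h1 := hcaseX hX
          have e : conj (c : ℂ) * X + conj (lam' * (d : ℂ)) * Y + conj (0 : ℂ) * Z
              = conj (lam' * (d : ℂ)) * Y := by
            rw [hX]; simp
          rw [e, norm_mul, hnconj, norm_mul, hlam', hnR d hd.le, one_mul]
          linarith [h1]
        · have h1 := hcaseY hY
          have e : conj (c : ℂ) * X + conj (lam' * (d : ℂ)) * Y + conj (0 : ℂ) * Z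
              = (c : ℂ) * X := by
            rw [hY, Complex.conj_ofReal]; simp
          rw [e, norm_mul, hnR c hc.le]
          rw [← h1]
      · -- P on the second circle
        rw [(submodule_eq_iff P _ (hnz _ (hwu mu hmu))).1 hx2, htu]
        rw [hqA _ u (hnz _ (hwu mu hmu)) hu0 (hwu mu hmu) hu1]
        rw [hw3 mu, huXYZ, hIP]
        have e : conj (0 : ℂ) * X + conj ((pp : ℝ) : ℂ) * Y + conj (mu * ((qq : ℝ) : ℂ)) * Z
            = ((pp : ℝ) : ℂ) * Y + conj mu * ((qq : ℝ) : ℂ) * Z := by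
          rw [Complex.conj_ofReal]
          simp only [map_mul, Complex.conj_ofReal, map_zero, zero_mul, zero_add]
          try ring
        rw [e]
        rcases hXY0 with hX | hY
        · -- X = 0 : split on the three cases
          have h1 := hcaseX hX
          have hXsq : ‖X‖ ^ 2 = 0 := by rw [hX, norm_zero]; norm_num
          rcases hcase with ⟨hc1, hda⟩ | ⟨ha', hc', hd'⟩ | ⟨ha', hc', hd'⟩
          · exfalso
            have hYad : ‖Y‖ = a / d := by rw [eq_div_iff hd.ne', ← h1]; ring
            have hY1 : 1 < ‖Y‖ := by
              rw [hYad, lt_div_iff₀ hd]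
              linarith
            have hY2 : 1 < ‖Y‖ ^ 2 := one_lt_pow₀ hY1 (by norm_num)
            have hY3 : ‖Y‖ ^ 2 ≤ 1 := by
              have n1 := sq_nonneg ‖X‖
              have n2 := sq_nonneg ‖Z‖
              linarith
            linarith
          · -- a = d = 1/√3, c = √(2/3)
            have ha2 : a ^ 2 = 1 / 3 := by rw [ha', div_pow, one_pow, hsqrt3]
            have hc2' : c ^ 2 = 2 / 3 := by rw [hc']; exact Real.sq_sqrt (by norm_num)
            have had : a = d := by rw [ha', hd']
            have hY1 : ‖Y‖ = 1 := by
              have : d * ‖Y‖ = d := by rw [h1, had]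
              exact mul_left_cancel₀ hd.ne' (by rw [this, mul_one])
            have hZ : Z = 0 := by
              rw [← norm_eq_zero]
              have hZsq : ‖Z‖ ^ 2 = 0 := by
                rw [hY1] at hsum
                linarith
              exact pow_eq_zero_iff (by norm_num) |>.1 hZsq
            have hppa : pp = a := by
              apply sq_inj_aux hpp0 ha0.le
              rw [hpp2, hqq2, ha2, hc2']
              norm_num
            rw [hZ]
            simp only [mul_zero, add_zero]
            rw [norm_mul, hnR pp hpp0, hY1, mul_one, hppa]
          · -- a = 1/√3, c = d = 1/√2
            have ha2 : a ^ 2 = 1 / 3 := by rw [ha', div_pow, one_pow, hsqrt3]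
            have hc2' : c ^ 2 = 1 / 2 := by rw [hc', div_pow, one_pow, hsqrt2]
            have hd2' : d ^ 2 = 1 / 2 := by rw [hd', div_pow, one_pow, hsqrt2]
            have hβa : β = a := by
              apply sq_inj_aux hβ0.le ha0.le
              rw [hβ2, ha2, hc2']
              norm_num
            have hqq1' : qq = 1 := by rw [hqqdef, hβa, div_self ha0.ne']
            have hpp0' : pp = 0 := by
              apply sq_inj_aux hpp0 le_rfl
              rw [hpp2, hqq1']
              norm_num
            have hYsq : ‖Y‖ ^ 2 = 2 / 3 := by
              have h2 : ‖Y‖ = a / d := by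
                rw [eq_div_iff hd.ne']
                rw [← h1]; ring
              rw [h2, div_pow, ha2, hd2']
              norm_num
            have hZn : ‖Z‖ = a := by
              apply sq_inj_aux (norm_nonneg _) ha0.le
              rw [ha2]
              linarith [hsum, hXsq, hYsq]
            rw [hpp0']
            simp only [Complex.ofReal_zero, zero_mul, zero_add]
            rw [norm_mul, norm_mul, hnconj, hmu, one_mul, hnR qq hqq0.le, hqq1', one_mul, hZn]
        · -- Y = 0
          have h1 := hcaseY hY
          have hXn : ‖X‖ = a / c := by rw [eq_div_iff hc.ne', ← h1]; ring
          have hZn : ‖Z‖ = β := by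
            apply sq_inj_aux (norm_nonneg _) hβ0.le
            have hYsq : ‖Y‖ ^ 2 = 0 := by rw [hY, norm_zero]; norm_num
            have hXsq : ‖X‖ ^ 2 = a ^ 2 / c ^ 2 := by rw [hXn, div_pow]
            rw [hβ2]
            linarith [hsum, hXsq, hYsq]
          rw [hY]
          simp only [mul_zero, zero_add]
          rw [norm_mul, norm_mul, hnconj, hmu, one_mul, hnR qq hqq0.le, hZn]
          rw [haβ]
  · -- disjointness
    rw [Set.disjoint_left]
    rintro x ⟨lam', hlam', hx1⟩ ⟨mu, hmu, hx2⟩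
    have hspan : Submodule.span ℂ {(c : ℂ) • e₁ + (lam' * d) • e₂}
        = Submodule.span ℂ {((pp : ℝ) : ℂ) • e₂ + (mu * ((qq : ℝ) : ℂ)) • e₃} :=
      hx1.symm.trans hx2
    have hmem : ((c : ℂ) • e₁ + (lam' * d) • e₂)
        ∈ Submodule.span ℂ {((pp : ℝ) : ℂ) • e₂ + (mu * ((qq : ℝ) : ℂ)) • e₃} := by
      rw [← hspan]
      exact Submodule.mem_span_singleton_self _
    obtain ⟨t, ht⟩ := Submodule.mem_span_singleton.1 hmem
    have h2 := congrArg (fun w => (inner ℂ e₁ w : ℂ)) ht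
    simp only [inner_add_right, inner_smul_right, he₁₂, he₁₃, smul_add, smul_smul] at h2
    rw [inner_self_eq_norm_sq_to_K, he₁] at h2
    have hc0 : (c : ℂ) = 0 := by simpa using h2.symm
    have : c = 0 := by exact_mod_cast hc0
    exact hc.ne' this
end
end
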